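/- arXiv:1506.00405 — 5 statements merged into one kernel-verified Lean document; each statement's English description precedes it below -/
import Mathlib

section
/- Let n ≥ 1, ε > 0 and let h : ℂⁿ → ℂ be analytic on the open ball B_n(ε) and not identically zero on B_n(ε). Then the set { x ∈ ℝⁿ : ‖x‖ < ε and h(x) ≠ 0 } is open and dense in the real ball { x ∈ ℝⁿ : ‖x‖ < ε }. -/
open Metric

noncomputable def Lre (n : ℕ) : (Fin n → ℝ) →L[ℝ] (Fin n → ℂ) :=
  ContinuousLinearMap.pi (fun i => Complex.ofRealCLM.comp (ContinuousLinearMap.proj i))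

lemma Lre_apply (n : ℕ) (x : Fin n → ℝ) : Lre n x = fun i => (x i : ℂ) := rfl

lemma norm_Lre (n : ℕ) (x : Fin n → ℝ) : ‖Lre n x‖ = ‖x‖ := by
  apply le_antisymm
  · apply pi_norm_le_iff_of_nonneg (norm_nonneg x) |>.2
    intro i
    simpa [Lre_apply] using norm_le_pi_norm x i
  · apply pi_norm_le_iff_of_nonneg (norm_nonneg _) |>.2
    intro i
    simpa [Lre_apply] using norm_le_pi_norm (Lre n x) i

/-- An entire function on `ℂⁿ` vanishing on `ℝⁿ` vanishes everywhere. -/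
lemma entire_zero (n : ℕ) (F : (Fin n → ℂ) → ℂ) (hF : ∀ z, AnalyticAt ℂ F z)
    (h0 : ∀ x : Fin n → ℝ, F (fun i => (x i : ℂ)) = 0) : ∀ w, F w = 0 := by
  have key : ∀ j : ℕ, ∀ w : Fin n → ℂ, (∀ i : Fin n, j ≤ (i : ℕ) → (w i).im = 0) → F w = 0 := by
    intro j
    induction j with
    | zero =>
      intro w hw
      have hwre : w = fun i => (((fun i => (w i).re) i : ℝ) : ℂ) := by
        funext i
        exact Complex.ext (by simp) (by simp [hw i (Nat.zero_le _)])
      rw [hwre]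
      exact h0 _
    | succ j ih =>
      intro w hw
      by_cases hj : j < n
      · set jf : Fin n := ⟨j, hj⟩
        set u : ℂ → (Fin n → ℂ) := fun z => Function.update w jf z with hu
        have hu_eq : u = fun z => Function.update w jf 0 + z • Pi.single jf (1 : ℂ) := by
          funext z i
          by_cases hi : i = jf
          · subst hi; simp [u]
          · simp [u, Function.update_of_ne hi, Pi.single, Function.update_of_ne hi]
        have hu_an : ∀ z : ℂ, AnalyticAt ℂ u z := by
          intro z
          rw [hu_eq]
          exact analyticAt_const.add ((analyticAt_id).smul analyticAt_const)
        set φ : ℂ → ℂ := fun z => F (u z) with hφ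
        have hφ_an : AnalyticOnNhd ℂ φ Set.univ := fun z _ => (hF (u z)).comp (hu_an z)
        have hφ_real : ∀ t : ℝ, φ (t : ℂ) = 0 := by
          intro t
          apply ih
          intro i hi
          by_cases hij : i = jf
          · subst hij; simp [u]
          · show (Function.update w jf (t : ℂ) i).im = 0
            rw [Function.update_of_ne hij]
            apply hw
            rcases lt_or_eq_of_le hi with h' | h'
            · omega
            · exact absurd (Fin.ext h'.symm) hij
        have hfreq : ∃ᶠ z in nhdsWithin (0 : ℂ) {(0 : ℂ)}ᶜ, φ z = 0 := by
          have htend : Filter.Tendsto (fun m : ℕ => ((((m : ℝ) + 1)⁻¹ : ℝ) : ℂ)) Filter.atTop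
              (nhdsWithin (0 : ℂ) {(0 : ℂ)}ᶜ) := by
            apply tendsto_nhdsWithin_of_tendsto_nhds_of_eventually_within
            · have : Filter.Tendsto (fun m : ℕ => ((m : ℝ) + 1)⁻¹) Filter.atTop (nhds 0) :=
                tendsto_one_div_add_atTop_nhds_zero_nat.congr (by simp [one_div])
              exact (Complex.continuous_ofReal.tendsto 0).comp this
            · filter_upwards with m
              simp only [Set.mem_compl_iff, Set.mem_singleton_iff]
              exact_mod_cast inv_ne_zero (by positivity : ((m : ℝ) + 1) ≠ 0)
          exact htend.frequently (Filter.Frequently.of_forall fun m => hφ_real _)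
        have := hφ_an.eqOn_zero_of_preconnected_of_frequently_eq_zero isPreconnected_univ
          (Set.mem_univ (0 : ℂ)) hfreq
        have hφw : φ (w jf) = 0 := this (Set.mem_univ _)
        simpa [hφ, hu, Function.update_eq_self] using hφw
      · -- j ≥ n : condition at level j is vacuous
        apply ih
        intro i hi
        omega
  intro w
  exact key n w (fun i hi => absurd i.isLt (by omega))

/-- Let `n ≥ 1`, `ε > 0` and let `h : ℂⁿ → ℂ` be analytic on the open ball
`B_n(ε)` and not identically zero there. Then `{x ∈ ℝⁿ : ‖x‖ < ε ∧ h x ≠ 0}` is open and dense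
in the real ball `{x ∈ ℝⁿ : ‖x‖ < ε}`. -/
theorem statement0 (n : ℕ) (hn : 1 ≤ n) (ε : ℝ) (hε : 0 < ε)
    (h : (Fin n → ℂ) → ℂ)
    (hh : AnalyticOnNhd ℂ h (ball (0 : Fin n → ℂ) ε))
    (hnz : ∃ z ∈ ball (0 : Fin n → ℂ) ε, h z ≠ 0) :
    IsOpen {x : Fin n → ℝ | ‖x‖ < ε ∧ h (fun i => (x i : ℂ)) ≠ 0} ∧
      {x : Fin n → ℝ | ‖x‖ < ε} ⊆
        closure {x : Fin n → ℝ | ‖x‖ < ε ∧ h (fun i => (x i : ℂ)) ≠ 0} := by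
  set L := Lre n
  set S := {x : Fin n → ℝ | ‖x‖ < ε ∧ h (fun i => (x i : ℂ)) ≠ 0} with hS
  have hmem : ∀ x : Fin n → ℝ, ‖x‖ < ε → L x ∈ ball (0 : Fin n → ℂ) ε := by
    intro x hx
    rw [mem_ball_zero_iff, norm_Lre]
    exact hx
  constructor
  · rw [isOpen_iff_mem_nhds]
    rintro x ⟨hx1, hx2⟩
    have hca : ContinuousAt (fun y : Fin n → ℝ => h (L y)) x :=
      ((hh (L x) (hmem x hx1)).continuousAt).comp (L.continuous.continuousAt)
    have h1 : {y : Fin n → ℝ | ‖y‖ < ε} ∈ nhds x :=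
      (isOpen_lt continuous_norm continuous_const).mem_nhds hx1
    have h2 : (fun y : Fin n → ℝ => h (L y)) ⁻¹' {(0 : ℂ)}ᶜ ∈ nhds x :=
      hca.preimage_mem_nhds (isOpen_compl_singleton.mem_nhds hx2)
    filter_upwards [h1, h2] with y hy1 hy2
    exact ⟨hy1, hy2⟩
  · intro x₀ hx₀
    by_contra hc
    rw [Metric.mem_closure_iff] at hc
    push_neg at hc
    obtain ⟨δ, hδ, hδ'⟩ := hc
    set δ' := min δ (ε - ‖x₀‖) with hδ'def
    have hδ'pos : 0 < δ' := lt_min hδ (by simpa using hx₀)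
    have hzero : ∀ y : Fin n → ℝ, dist y x₀ < δ' → h (L y) = 0 := by
      intro y hy
      have hyn : ‖y‖ < ε := by
        calc ‖y‖ ≤ ‖x₀‖ + ‖y - x₀‖ := by simpa using norm_add_le x₀ (y - x₀)
        _ < ‖x₀‖ + δ' := by rw [← dist_eq_norm] at *; linarith
        _ ≤ ε := by rw [hδ'def]; have := min_le_right δ (ε - ‖x₀‖); linarith
      by_contra hne
      have : y ∈ S := ⟨hyn, hne⟩
      have := hδ' y this
      rw [dist_comm] at this
      exact absurd hy (not_lt.2 (le_trans (min_le_left _ _) this))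
    have hz₀ : L x₀ ∈ ball (0 : Fin n → ℂ) ε := hmem x₀ hx₀
    obtain ⟨p, r, hpr⟩ := hh (L x₀) hz₀
    set q : FormalMultilinearSeries ℝ (Fin n → ℝ) ℂ :=
      fun k => ((p k).restrictScalars ℝ).compContinuousLinearMap (fun _ => L) with hq
    have hLnorm : ‖L‖ ≤ 1 := by
      apply ContinuousLinearMap.opNorm_le_bound _ zero_le_one
      intro x; rw [norm_Lre]; simp
    have hqnorm : ∀ k, ‖q k‖ ≤ ‖p k‖ := by
      intro k
      calc ‖q k‖ ≤ ‖(p k).restrictScalars ℝ‖ * ∏ _i : Fin k, ‖L‖ :=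
            ContinuousMultilinearMap.norm_compContinuousLinearMap_le _ _
      _ ≤ ‖p k‖ * 1 := by
            rw [ContinuousMultilinearMap.norm_restrictScalars]
            exact mul_le_mul_of_nonneg_left
              (Finset.prod_le_one (fun _ _ => norm_nonneg _) (fun _ _ => hLnorm))
              (norm_nonneg _)
      _ = ‖p k‖ := mul_one _
    set r' := min r (ENNReal.ofReal δ') with hr'
    have hball : HasFPowerSeriesOnBall (0 : (Fin n → ℝ) → ℂ) q x₀ r' := by
      constructor
      · calc r' ≤ r := min_le_left _ _
        _ ≤ p.radius := hpr.r_le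
        _ ≤ q.radius := FormalMultilinearSeries.radius_le_of_le hqnorm
      · exact lt_min hpr.r_pos (ENNReal.ofReal_pos.2 hδ'pos)
      · intro y hy
        rw [EMetric.mem_ball, edist_zero_right] at hy
        have hy1 : (‖y‖₊ : ENNReal) < r := lt_of_lt_of_le hy (min_le_left _ _)
        have hy2 : ‖y‖ < δ' := by
          have h3 := lt_of_lt_of_le hy (min_le_right _ _)
          rw [← ofReal_norm] at h3
          exact (ENNReal.ofReal_lt_ofReal_iff hδ'pos).1 h3
        have hLy : L y ∈ Metric.eball (0 : Fin n → ℂ) r := by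
          rw [Metric.mem_eball, edist_zero_right, ← ofReal_norm, norm_Lre]
          rw [ofReal_norm]; exact hy1
        have hs := hpr.hasSum hLy
        have hterm : ∀ k, (q k fun _ => y) = (p k fun _ => L y) := fun k => rfl
        have hval : h (L x₀ + L y) = 0 := by
          have : L x₀ + L y = L (x₀ + y) := (L.map_add x₀ y).symm
          rw [this]
          apply hzero
          rw [dist_eq_norm]
          simpa using hy2
        rw [hval] at hs
        simpa [hterm] using hs
    have happly := hball.hasFPowerSeriesAt.apply_eq_zero
    -- each coefficient of p vanishes on the diagonal
    have hdiag : ∀ k, ∀ w : Fin n → ℂ, (p k fun _ => w) = 0 := by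
      intro k
      apply entire_zero n (fun w => p k fun _ => w)
      · intro z
        have hd : AnalyticAt ℂ (fun w : Fin n → ℂ => (fun _ : Fin k => w)) z := by
          exact (ContinuousLinearMap.pi (fun _ : Fin k =>
            ContinuousLinearMap.id ℂ (Fin n → ℂ))).analyticAt z
        exact ((p k).analyticAt (x := fun _ : Fin k => z)).comp hd
      · intro x
        exact happly k x
    have hev : h =ᶠ[nhds (L x₀)] 0 := by
      filter_upwards [hpr.eventually_hasSum_sub] with z hz
      have : HasSum (fun k : ℕ => p k fun _ => z - L x₀) 0 := by
        have h0 : HasSum (fun _ : ℕ => (0 : ℂ)) 0 := hasSum_zero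
        simpa [hdiag] using h0
      exact hz.unique this
    have := hh.eqOn_zero_of_preconnected_of_eventuallyEq_zero
      ((convex_ball (0 : Fin n → ℂ) ε).isPreconnected) hz₀ hev
    obtain ⟨z, hz, hzne⟩ := hnz
    exact hzne (this hz)
end

section
/- Let p, q ≥ 1, ε > 0 and let α : ℂ^{p+q} → ℂ be analytic on the open ball B_{p+q}(ε). Suppose there is a nonempty open subset W of the real ball { a ∈ ℝ^q : ‖a‖ < ε } such that α(u, a) = 0 for every a ∈ W and every u ∈ ℂ^p with (u, a) ∈ B_{p+q}(ε). Then α is identically zero on B_{p+q}(ε). -/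
open Metric

/-- Let `p, q ≥ 1`, `ε > 0` and let `α : ℂ^{p+q} → ℂ` be analytic on the open
ball `B_{p+q}(ε)`. Suppose there is a nonempty open subset `W` of the real ball
`{a ∈ ℝ^q : ‖a‖ < ε}` such that `α(u, a) = 0` for every `a ∈ W` and every `u ∈ ℂ^p` with
`(u, a) ∈ B_{p+q}(ε)`. Then `α` is identically zero on `B_{p+q}(ε)`. -/
theorem statement1 (p q : ℕ) (hp : 1 ≤ p) (hq : 1 ≤ q) (ε : ℝ) (hε : 0 < ε)
    (α : (Fin (p + q) → ℂ) → ℂ)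
    (hα : AnalyticOnNhd ℂ α (ball (0 : Fin (p + q) → ℂ) ε))
    (W : Set (Fin q → ℝ)) (hWopen : IsOpen W) (hWne : W.Nonempty)
    (hWsub : W ⊆ {a : Fin q → ℝ | ‖a‖ < ε})
    (hzero : ∀ a ∈ W, ∀ u : Fin p → ℂ,
      Fin.append u (fun i => ((a i : ℂ))) ∈ ball (0 : Fin (p + q) → ℂ) ε →
      α (Fin.append u (fun i => ((a i : ℂ)))) = 0) :
    ∀ z ∈ ball (0 : Fin (p + q) → ℂ) ε, α z = 0 := by
  obtain ⟨a₀, ha₀⟩ := hWne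
  obtain ⟨r₁, hr₁, hball⟩ := Metric.isOpen_iff.1 hWopen a₀ ha₀
  have ha₀ε : ‖a₀‖ < ε := hWsub ha₀
  set r : ℝ := min (r₁ / 2) ((ε - ‖a₀‖) / 2) with hr_def
  have hr : 0 < r := lt_min (by linarith) (by linarith)
  have hrr₁ : r < r₁ := lt_of_le_of_lt (min_le_left _ _) (by linarith)
  have hrε : ‖a₀‖ + r < ε := by
    have : r ≤ (ε - ‖a₀‖) / 2 := min_le_right _ _
    linarith
  have ha₀i : ∀ i, ‖a₀ i‖ ≤ ‖a₀‖ := fun i => norm_le_pi_norm a₀ i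
  -- membership criterion for the big ball
  have hmem : ∀ (u : Fin p → ℂ) (c : Fin q → ℂ), ‖u‖ < ε →
      (∀ i, ‖c i - (a₀ i : ℂ)‖ < r) →
      Fin.append u c ∈ ball (0 : Fin (p + q) → ℂ) ε := by
    intro u c hu hc
    rw [mem_ball_zero_iff, pi_norm_lt_iff hε]
    intro j
    refine Fin.addCases (fun i => ?_) (fun i => ?_) j
    · rw [Fin.append_left]
      exact lt_of_le_of_lt (norm_le_pi_norm u i) hu
    · rw [Fin.append_right]
      calc ‖c i‖ ≤ ‖c i - (a₀ i : ℂ)‖ + ‖(a₀ i : ℂ)‖ := by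
            simpa using norm_add_le (c i - (a₀ i : ℂ)) ((a₀ i : ℂ))
        _ < r + ‖a₀‖ := by
            have := ha₀i i
            rw [Complex.norm_real] at *
            linarith [hc i]
        _ < ε := by linarith
  -- key induction: complexify coordinates one at a time
  have key : ∀ k : ℕ, k ≤ q → ∀ c : Fin q → ℂ,
      (∀ i, ‖c i - (a₀ i : ℂ)‖ < r) → (∀ i : Fin q, k ≤ (i : ℕ) → (c i).im = 0) →
      ∀ u : Fin p → ℂ, ‖u‖ < ε → α (Fin.append u c) = 0 := by
    intro k
    induction k with
    | zero =>
      intro _ c hc hreal u hu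
      set b : Fin q → ℝ := fun i => (c i).re with hb
      have hcb : c = fun i => ((b i : ℝ) : ℂ) := by
        funext i
        apply Complex.ext
        · simp [hb]
        · simp [hb, hreal i (Nat.zero_le _)]
      have hbW : b ∈ W := by
        apply hball
        rw [mem_ball, dist_pi_lt_iff hr₁]
        intro i
        have h := hc i
        calc dist (b i) (a₀ i) = ‖c i - (a₀ i : ℂ)‖ := by
              rw [hcb]
              simp [Real.dist_eq, ← Complex.ofReal_sub, Complex.norm_real, Real.norm_eq_abs]
          _ < r := h
          _ < r₁ := hrr₁
      rw [hcb]
      exact hzero b hbW u (by rw [← hcb]; exact hmem u c hu hc)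
    | succ k ih =>
      intro hk c hc hreal u hu
      have hkq : k < q := hk
      set k' : Fin q := ⟨k, hkq⟩ with hk'
      set f : ℂ → ℂ := fun z => α (Fin.append u (Function.update c k' z)) with hf_def
      -- f is analytic on ball (a₀ k') r
      have hg : ∀ z : ℂ, ‖z - (a₀ k' : ℂ)‖ < r →
          (∀ i, ‖Function.update c k' z i - (a₀ i : ℂ)‖ < r) := by
        intro z hz i
        rcases eq_or_ne i k' with rfl | hi
        · simpa using hz
        · simpa [Function.update_of_ne hi] using hc i
      have hfa : AnalyticOnNhd ℂ f (ball ((a₀ k' : ℂ)) r) := by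
        have hgan : AnalyticOnNhd ℂ (fun z : ℂ => Fin.append u (Function.update c k' z))
            (ball ((a₀ k' : ℂ)) r) := by
          intro z hz
          apply AnalyticAt.pi
          intro j
          refine Fin.addCases (fun i => ?_) (fun i => ?_) j
          · simp only [Fin.append_left]; exact analyticAt_const
          · simp only [Fin.append_right]
            rcases eq_or_ne i k' with rfl | hi
            · simp only [Function.update_self]; exact analyticAt_id
            · simpa [Function.update_of_ne hi] using (analyticAt_const : AnalyticAt ℂ (fun _ : ℂ => c i) z)
        exact hα.comp hgan (fun z hz => hmem u _ hu (hg z (by simpa [mem_ball, dist_eq_norm] using hz)))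
      -- f vanishes frequently near (a₀ k')
      have hseq : ∀ n : ℕ, f ((a₀ k' + r / (n + 2) : ℝ) : ℂ) = 0 := by
        intro n
        have hpos : 0 < r / ((n : ℝ) + 2) := by positivity
        have hlt : r / ((n : ℝ) + 2) < r := by
          rw [div_lt_iff₀ (by positivity)]
          nlinarith [hr]
        apply ih (le_of_lt hkq) _ _ _ u hu
        · intro i
          rcases eq_or_ne i k' with h | hi
          · rw [h, Function.update_self]
            rw [show ((a₀ k' + r / (n + 2) : ℝ) : ℂ) - (a₀ k' : ℂ) = ((r / (n + 2) : ℝ) : ℂ) by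
              push_cast; ring]
            rw [Complex.norm_real, Real.norm_eq_abs, abs_of_pos hpos]
            exact hlt
          · simpa [Function.update_of_ne hi] using hc i
        · intro i hi
          rcases eq_or_ne i k' with h | hik
          · rw [h, Function.update_self]
            exact Complex.ofReal_im _
          · have hki : k + 1 ≤ (i : ℕ) := by
              rcases Nat.lt_or_ge (i : ℕ) (k + 1) with h | h
              · exfalso; apply hik; apply Fin.ext
                simp only [hk']
                omega
              · exact h
            simpa [Function.update_of_ne hik] using hreal i hki
      have hfreq : ∃ᶠ z in nhdsWithin ((a₀ k' : ℂ)) {((a₀ k' : ℂ))}ᶜ, f z = 0 := by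
        have htend : Filter.Tendsto (fun n : ℕ => ((a₀ k' + r / (n + 2) : ℝ) : ℂ))
            Filter.atTop (nhdsWithin ((a₀ k' : ℂ)) {((a₀ k' : ℂ))}ᶜ) := by
          rw [tendsto_nhdsWithin_iff]
          constructor
          · have h0 : Filter.Tendsto (fun n : ℕ => r / ((n : ℝ) + 2)) Filter.atTop (nhds 0) := by
              apply Filter.Tendsto.div_atTop tendsto_const_nhds
              exact Filter.tendsto_atTop_add_const_right _ 2 tendsto_natCast_atTop_atTop
            have : Filter.Tendsto (fun n : ℕ => (a₀ k' + r / (n + 2) : ℝ)) Filter.atTop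
                (nhds (a₀ k')) := by
              simpa using tendsto_const_nhds.add h0
            exact (Complex.continuous_ofReal.tendsto _).comp this
          · apply Filter.Eventually.of_forall
            intro n
            simp only [Set.mem_compl_iff, Set.mem_singleton_iff]
            intro h
            have := Complex.ofReal_injective h
            have hpos : 0 < r / ((n : ℝ) + 2) := by positivity
            linarith [this ▸ le_refl (a₀ k')]
        exact htend.frequently (Filter.Eventually.of_forall hseq).frequently
      have hzero' : Set.EqOn f 0 (ball ((a₀ k' : ℂ)) r) :=
        hfa.eqOn_zero_of_preconnected_of_frequently_eq_zero
          (convex_ball _ _).isPreconnected (mem_ball_self hr) hfreq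
      have : f (c k') = 0 := hzero' (by simpa [mem_ball, dist_eq_norm] using hc k')
      simpa [hf_def, Function.update_eq_self] using this
  -- conclude via identity theorem
  set z₀ : Fin (p + q) → ℂ := Fin.append (0 : Fin p → ℂ) (fun i => ((a₀ i : ℂ))) with hz₀
  have hz₀mem : z₀ ∈ ball (0 : Fin (p + q) → ℂ) ε := by
    rw [mem_ball_zero_iff, pi_norm_lt_iff hε]
    intro j
    refine Fin.addCases (fun i => ?_) (fun i => ?_) j
    · simp [hz₀, Fin.append_left, hε]
    · rw [hz₀, Fin.append_right]
      rw [Complex.norm_real]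
      exact lt_of_le_of_lt (by simpa using ha₀i i) ha₀ε
  have hev : α =ᶠ[nhds z₀] 0 := by
    filter_upwards [Metric.ball_mem_nhds z₀ hr] with z hz
    have hz' : ∀ j, ‖z j - z₀ j‖ < r := by
      intro j
      exact lt_of_le_of_lt (norm_le_pi_norm (z - z₀) j) (by rwa [mem_ball, dist_eq_norm] at hz)
    have hzdecomp : z = Fin.append (fun i => z (Fin.castAdd q i)) (fun i => z (Fin.natAdd p i)) := by
      funext j
      refine Fin.addCases (fun i => ?_) (fun i => ?_) j
      · rw [Fin.append_left]
      · rw [Fin.append_right]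
    have h1 : ∀ i : Fin p, ‖z (Fin.castAdd q i)‖ < r := by
      intro i
      have := hz' (Fin.castAdd q i)
      simpa [hz₀, Fin.append_left] using this
    have h2 : ∀ i : Fin q, ‖z (Fin.natAdd p i) - (a₀ i : ℂ)‖ < r := by
      intro i
      have := hz' (Fin.natAdd p i)
      simpa [hz₀, Fin.append_right] using this
    have hu : ‖fun i => z (Fin.castAdd q i)‖ < ε := by
      rw [pi_norm_lt_iff hε]
      intro i
      exact lt_of_lt_of_le (h1 i) (by linarith [norm_nonneg a₀])
    rw [hzdecomp]
    exact key q (le_refl q) _ h2 (fun i hi => absurd hi (by omega)) _ hu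
  exact hα.eqOn_zero_of_preconnected_of_eventuallyEq_zero
    (convex_ball _ _).isPreconnected hz₀mem hev
end

section
/- Let ε > 0 and let φ₁, …, φ_m be meromorphic functions on B_n(ε) that are algebraically independent over ℂ. Let f = α/β be a meromorphic function on D := {(a,b) ∈ ℂⁿ×ℂⁿ : a+b ∈ B_n(ε)} (α, β analytic on D, β not identically zero) such that for every k ∈ B_n(ε) the function u ↦ β(u,k) is not identically zero on {u ∈ ℂⁿ : u+k ∈ B_n(ε)}. Assume f(u,v) is algebraic over ℂ(φ₁(u),…,φ_m(u),φ₁(v),…,φ_m(v)), i.e. there is a nonzero polynomial P ∈ ℂ[X₁,…,X_{2m},Y] with P(φ₁(u),…,φ_m(u),φ₁(v),…,φ_m(v),f(u,v)) = 0 for all (u,v) with u, v, u+v ∈ B_n(ε) and all representing denominators nonzero. Then there exists N ∈ ℕ such that for every k ∈ B_n(ε) there are h ≤ N and polynomials R₀,…,R_{h−1}, S₀,…,S_{h−1} ∈ ℂ[X₁,…,X_m], each of degree at most N in each of the variables X₁,…,X_m, with no Sᵢ(φ₁,…,φ_m) identically zero, such that f(u,k)^h + ∑_{i=0}^{h−1}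 (Rᵢ(φ₁(u),…,φ_m(u))/Sᵢ(φ₁(u),…,φ_m(u))) · f(u,k)^i = 0 for all u in a neighbourhood of 0 at which all occurring denominators are nonzero. In particular f(u,k) is algebraic over ℂ(φ₁,…,φ_m) for every k ∈ B_n(ε). -/
open Metric MvPolynomial Filter Topology

section Aux
variable {E : Type*} [NormedAddCommGroup E] [NormedSpace ℂ E] {U : Set E}

private lemma aux_mul_zero (hU : IsOpen U) (hUc : IsPreconnected U) {g h : E → ℂ}
    (hg : AnalyticOnNhd ℂ g U) (hh : AnalyticOnNhd ℂ h U)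
    (hz : ∀ x ∈ U, g x * h x = 0) (hx : ∃ x ∈ U, h x ≠ 0) :
    ∀ x ∈ U, g x = 0 := by
  obtain ⟨x₀, hx₀U, hx₀⟩ := hx
  have hev : g =ᶠ[𝓝 x₀] 0 := by
    filter_upwards [hU.mem_nhds hx₀U, ((hh x₀ hx₀U).continuousAt).eventually_ne hx₀] with y hyU hyne
    exact (mul_eq_zero.mp (hz y hyU)).resolve_right hyne
  exact fun x hxU => hg.eqOn_zero_of_preconnected_of_eventuallyEq_zero hUc hx₀U hev hxU

private lemma aux_prod_zero (hU : IsOpen U) (hUc : IsPreconnected U) {ι : Type*} (s : Finset ι)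
    (F : ι → E → ℂ)
    (hF : ∀ i ∈ s, AnalyticOnNhd ℂ (F i) U) (hFn : ∀ i ∈ s, ∃ x ∈ U, F i x ≠ 0)
    {g : E → ℂ} (hg : AnalyticOnNhd ℂ g U) (hz : ∀ x ∈ U, g x * ∏ i ∈ s, F i x = 0) :
    ∀ x ∈ U, g x = 0 := by
  classical
  induction s using Finset.induction_on with
  | empty => simpa using hz
  | @insert a s' ha ih =>
    have h1 : ∀ x ∈ U, (fun y => g y * ∏ i ∈ s', F i y) x * F a x = 0 := by
      intro x hxU
      have h0 := hz x hxU
      rw [Finset.prod_insert ha] at h0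
      show g x * (∏ i ∈ s', F i x) * F a x = 0
      rw [mul_assoc, mul_comm (∏ i ∈ s', F i x) (F a x)]
      exact h0
    have h2 : ∀ x ∈ U, g x * ∏ i ∈ s', F i x = 0 :=
      aux_mul_zero hU hUc
        (hg.mul (Finset.analyticOnNhd_fun_prod s' fun i hi => hF i (Finset.mem_insert_of_mem hi)))
        (hF a (Finset.mem_insert_self a s')) h1 (hFn a (Finset.mem_insert_self a s'))
    exact ih (fun i hi => hF i (Finset.mem_insert_of_mem hi))
      (fun i hi => hFn i (Finset.mem_insert_of_mem hi)) h2

private lemma aux_not_ae_zero {V : Set E} (hUc : IsPreconnected U) (hVo : IsOpen V)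
    (hVU : V ⊆ U) {x₀ : E}
    (hx₀ : x₀ ∈ V) {g : E → ℂ} (hg : AnalyticOnNhd ℂ g U) (hex : ∃ x ∈ U, g x ≠ 0) :
    ∃ x ∈ V, g x ≠ 0 := by
  by_contra hcon; push_neg at hcon
  obtain ⟨y, hyU, hy⟩ := hex
  have hev : g =ᶠ[𝓝 x₀] 0 := eventually_of_mem (hVo.mem_nhds hx₀) hcon
  exact hy (hg.eqOn_zero_of_preconnected_of_eventuallyEq_zero hUc (hVU hx₀) hev hyU)

end Aux

private lemma aux_pow_clear {x y : ℂ} (hy : y ≠ 0) {a d : ℕ} (h : a ≤ d) :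
    x ^ a * y ^ (d - a) = y ^ d * (x / y) ^ a := by
  rw [pow_sub₀ y hy h, div_pow, div_eq_mul_inv]; ring

private lemma aux_block_clear {m : ℕ} {φn φd : Fin m → ℂ} (hd : ∀ j, φd j ≠ 0)
    {s dd : Fin m → ℕ} (hs : ∀ j, s j ≤ dd j) :
    ∏ j, (φn j ^ s j * φd j ^ (dd j - s j)) = (∏ j, φd j ^ dd j) * ∏ j, (φn j / φd j) ^ s j := by
  rw [← Finset.prod_mul_distrib]
  exact Finset.prod_congr rfl fun j _ => by rw [aux_pow_clear (hd j) (hs j)]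

/-- (Lemma "core".)  Let `φ₁, …, φ_m` be meromorphic on `B_n(ε)`, algebraically
independent over `ℂ`.  Let `f = α/β` be meromorphic on `D = {(a,b) : a+b ∈ B_n(ε)}`, with
`β(·,k)` not identically zero on each slice, and suppose `f(u,v)` is algebraic over
`ℂ(φ(u), φ(v))`.  Then there exists `N ∈ ℕ` such that for every `k ∈ B_n(ε)` there are `h ≤ N`
and polynomials `R₀,…,R_{h−1}, S₀,…,S_{h−1}` of degree at most `N` in each variable, with no
`Sᵢ(φ)` identically zero, such that
`f(u,k)^h + ∑ᵢ (Rᵢ(φ(u))/Sᵢ(φ(u))) f(u,k)^i = 0` near `0` where all denominators are nonzero. -/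
theorem statement2 (n m : ℕ) (hn : 1 ≤ n) (hm : 1 ≤ m) (ε : ℝ) (hε : 0 < ε)
    (φnum φden : Fin m → (Fin n → ℂ) → ℂ)
    (hφn : ∀ i, AnalyticOnNhd ℂ (φnum i) (ball (0 : Fin n → ℂ) ε))
    (hφd : ∀ i, AnalyticOnNhd ℂ (φden i) (ball (0 : Fin n → ℂ) ε))
    (hφdz : ∀ i, ∃ z ∈ ball (0 : Fin n → ℂ) ε, φden i z ≠ 0)
    (hindep : ∀ Q : MvPolynomial (Fin m) ℂ,
      (∀ z ∈ ball (0 : Fin n → ℂ) ε, (∀ i, φden i z ≠ 0) →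
        eval (fun i => φnum i z / φden i z) Q = 0) → Q = 0)
    (α β : ((Fin n → ℂ) × (Fin n → ℂ)) → ℂ)
    (hαa : AnalyticOnNhd ℂ α {w : (Fin n → ℂ) × (Fin n → ℂ) | w.1 + w.2 ∈ ball (0 : Fin n → ℂ) ε})
    (hβa : AnalyticOnNhd ℂ β {w : (Fin n → ℂ) × (Fin n → ℂ) | w.1 + w.2 ∈ ball (0 : Fin n → ℂ) ε})
    (hβz : ∃ w : (Fin n → ℂ) × (Fin n → ℂ), w.1 + w.2 ∈ ball (0 : Fin n → ℂ) ε ∧ β w ≠ 0)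
    (hslice : ∀ k ∈ ball (0 : Fin n → ℂ) ε, ∃ u : Fin n → ℂ,
      u + k ∈ ball (0 : Fin n → ℂ) ε ∧ β (u, k) ≠ 0)
    (P : MvPolynomial ((Fin m ⊕ Fin m) ⊕ Unit) ℂ) (hP : P ≠ 0)
    (hPf : ∀ u v : Fin n → ℂ, u ∈ ball (0 : Fin n → ℂ) ε → v ∈ ball (0 : Fin n → ℂ) ε →
      u + v ∈ ball (0 : Fin n → ℂ) ε →
      (∀ i, φden i u ≠ 0 ∧ φden i v ≠ 0) → β (u, v) ≠ 0 →
      eval (Sum.elim (Sum.elim (fun i => φnum i u / φden i u) (fun i => φnum i v / φden i v))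
        (fun _ => α (u, v) / β (u, v))) P = 0) :
    ∃ N : ℕ, ∀ k ∈ ball (0 : Fin n → ℂ) ε, ∃ h : ℕ, 1 ≤ h ∧ h ≤ N ∧
      ∃ R S : Fin h → MvPolynomial (Fin m) ℂ,
        (∀ i j, (R i).degreeOf j ≤ N ∧ (S i).degreeOf j ≤ N) ∧
        (∀ i, ∃ z ∈ ball (0 : Fin n → ℂ) ε, (∀ j, φden j z ≠ 0) ∧
          eval (fun j => φnum j z / φden j z) (S i) ≠ 0) ∧
        ∃ δ : ℝ, 0 < δ ∧ ∀ u ∈ ball (0 : Fin n → ℂ) δ, u + k ∈ ball (0 : Fin n → ℂ) ε →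
          (∀ j, φden j u ≠ 0) → β (u, k) ≠ 0 →
          (∀ i, eval (fun j => φnum j u / φden j u) (S i) ≠ 0) →
          (α (u, k) / β (u, k)) ^ h +
            ∑ i : Fin h, (eval (fun j => φnum j u / φden j u) (R i) /
                eval (fun j => φnum j u / φden j u) (S i)) *
              (α (u, k) / β (u, k)) ^ (i : ℕ) = 0 := by
  classical
  set Bε := ball (0 : Fin n → ℂ) ε with hBεdef
  have hBo : IsOpen Bε := isOpen_ball
  have hBc : IsPreconnected Bε := (convex_ball (0 : Fin n → ℂ) ε).isPreconnected
  have h0B : (0 : Fin n → ℂ) ∈ Bε := mem_ball_self hε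
  set d : Fin m → ℕ := fun j => P.degreeOf (Sum.inl (Sum.inl j)) with hddef
  set e : Fin m → ℕ := fun j => P.degreeOf (Sum.inl (Sum.inr j)) with hedef
  set dY : ℕ := P.degreeOf (Sum.inr ()) with hdYdef
  have hsX : ∀ s ∈ P.support, ∀ j : Fin m, s (Sum.inl (Sum.inl j)) ≤ d j :=
    fun s hs j => monomial_le_degreeOf _ hs
  have hsV : ∀ s ∈ P.support, ∀ j : Fin m, s (Sum.inl (Sum.inr j)) ≤ e j :=
    fun s hs j => monomial_le_degreeOf _ hs
  have hsY : ∀ s ∈ P.support, s (Sum.inr ()) ≤ dY := fun s hs => monomial_le_degreeOf _ hs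
  -- the cleared analytic function on the two-variable domain
  set DS : Set ((Fin n → ℂ) × (Fin n → ℂ)) :=
    {w | w.1 ∈ Bε ∧ w.2 ∈ Bε ∧ w.1 + w.2 ∈ Bε} with hDSdef
  have hDSo : IsOpen DS := by
    have : DS = (Prod.fst ⁻¹' Bε) ∩ ((Prod.snd ⁻¹' Bε) ∩ ((fun w :
        (Fin n → ℂ) × (Fin n → ℂ) => w.1 + w.2) ⁻¹' Bε)) := rfl
    rw [this]
    exact (hBo.preimage continuous_fst).inter ((hBo.preimage continuous_snd).inter
      (hBo.preimage (continuous_fst.add continuous_snd)))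
  have hDSc : IsPreconnected DS := by
    refine Convex.isPreconnected ?_
    intro x hx y hy a b ha hb hab
    obtain ⟨hx1, hx2, hx3⟩ := hx; obtain ⟨hy1, hy2, hy3⟩ := hy
    refine ⟨?_, ?_, ?_⟩
    · exact (convex_ball (0 : Fin n → ℂ) ε) hx1 hy1 ha hb hab
    · exact (convex_ball (0 : Fin n → ℂ) ε) hx2 hy2 ha hb hab
    · have := (convex_ball (0 : Fin n → ℂ) ε) hx3 hy3 ha hb hab
      have heq : (a • x + b • y).1 + (a • x + b • y).2
          = a • (x.1 + x.2) + b • (y.1 + y.2) := by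
        simp [Prod.fst_add, Prod.snd_add, smul_add]; module
      rwa [heq]
  set A : ((Fin n → ℂ) × (Fin n → ℂ)) → ℂ := fun w =>
    ∑ s ∈ P.support, P.coeff s *
      ((∏ j, φnum j w.1 ^ s (Sum.inl (Sum.inl j)) *
        φden j w.1 ^ (d j - s (Sum.inl (Sum.inl j)))) *
       ((∏ j, φnum j w.2 ^ s (Sum.inl (Sum.inr j)) *
        φden j w.2 ^ (e j - s (Sum.inl (Sum.inr j)))) *
        (α w ^ s (Sum.inr ()) * β w ^ (dY - s (Sum.inr ()))))) with hAdef
  have hAan : ∀ w ∈ DS, AnalyticAt ℂ A w := by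
    intro w hw
    obtain ⟨hw1, hw2, hw3⟩ := hw
    simp only [hAdef]
    apply Finset.analyticAt_fun_sum
    intro s _
    apply analyticAt_const.mul
    apply AnalyticAt.mul
    · apply Finset.analyticAt_fun_prod
      intro j _
      exact (((hφn j w.1 hw1).comp analyticAt_fst).pow _).mul
        (((hφd j w.1 hw1).comp analyticAt_fst).pow _)
    apply AnalyticAt.mul
    · apply Finset.analyticAt_fun_prod
      intro j _
      exact (((hφn j w.2 hw2).comp analyticAt_snd).pow _).mul
        (((hφd j w.2 hw2).comp analyticAt_snd).pow _)
    exact ((hαa w hw3).pow _).mul ((hβa w hw3).pow _)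
  have hAgood : ∀ w ∈ DS, (∀ j, φden j w.1 ≠ 0) → (∀ j, φden j w.2 ≠ 0) → β w ≠ 0 →
      A w = 0 := by
    intro w hw h1 h2 hb
    obtain ⟨hw1, hw2, hw3⟩ := hw
    have hev := hPf w.1 w.2 hw1 hw2 hw3 (fun i => ⟨h1 i, h2 i⟩) hb
    simp only [Prod.mk.eta] at hev
    have hrw : A w = ((∏ j, φden j w.1 ^ d j) * ((∏ j, φden j w.2 ^ e j) * β w ^ dY)) *
        eval (Sum.elim (Sum.elim (fun i => φnum i w.1 / φden i w.1)
          (fun i => φnum i w.2 / φden i w.2)) (fun _ => α w / β w)) P := by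
      simp only [hAdef]
      rw [eval_eq', Finset.mul_sum]
      refine Finset.sum_congr rfl fun s hs => ?_
      simp only [Fintype.prod_sum_type, Fintype.prod_unique, Sum.elim_inl, Sum.elim_inr,
        show (default : Unit) = () from rfl]
      rw [aux_block_clear h1 (hsX s hs), aux_block_clear h2 (hsV s hs),
          aux_pow_clear hb (hsY s hs)]
      ring
    rw [hrw, hev, mul_zero]
  have hA0 : ∀ w ∈ DS, A w = 0 := by
    have hhalf : ∀ z ∈ Bε, ((1/2 : ℂ) • z ∈ Bε ∧ -((1/2 : ℂ) • z) ∈ Bε) := by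
      intro z hz
      rw [hBεdef, mem_ball_zero_iff] at hz
      have h2 : ‖(1/2 : ℂ) • z‖ < ε := by
        rw [norm_smul]
        have hn : ‖(1/2 : ℂ)‖ = 1/2 := by norm_num
        rw [hn]
        nlinarith [norm_nonneg z]
      constructor
      · rw [hBεdef, mem_ball_zero_iff]; exact h2
      · rw [hBεdef, mem_ball_zero_iff, norm_neg]; exact h2
    set FF : Option (Fin m ⊕ Fin m) → ((Fin n → ℂ) × (Fin n → ℂ)) → ℂ := fun oo w =>
      Option.elim oo (β w) (fun i => Sum.elim (fun j => φden j w.1) (fun j => φden j w.2) i)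
      with hFFdef
    have hFFan : ∀ i ∈ (Finset.univ : Finset (Option (Fin m ⊕ Fin m))),
        AnalyticOnNhd ℂ (FF i) DS := by
      intro i _
      match i with
      | none => exact fun w hw => hβa w hw.2.2
      | some (Sum.inl j) => exact fun w hw => (hφd j w.1 hw.1).comp analyticAt_fst
      | some (Sum.inr j) => exact fun w hw => (hφd j w.2 hw.2.1).comp analyticAt_snd
    have hFFnz : ∀ i ∈ (Finset.univ : Finset (Option (Fin m ⊕ Fin m))),
        ∃ x ∈ DS, FF i x ≠ 0 := by
      intro i _
      match i with
      | none =>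
        obtain ⟨u₀, hu₀, hbne⟩ := hslice 0 h0B
        rw [add_zero] at hu₀
        exact ⟨(u₀, 0), ⟨hu₀, h0B, by simpa using hu₀⟩, hbne⟩
      | some (Sum.inl j) =>
        obtain ⟨z, hz, hzne⟩ := hφdz j
        refine ⟨(z, -((1/2 : ℂ) • z)), ⟨hz, (hhalf z hz).2, ?_⟩, hzne⟩
        show z + -((1/2 : ℂ) • z) ∈ Bε
        have : z + -((1/2 : ℂ) • z) = (1/2 : ℂ) • z := by module
        rw [this]
        exact (hhalf z hz).1
      | some (Sum.inr j) =>
        obtain ⟨z, hz, hzne⟩ := hφdz j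
        refine ⟨(-((1/2 : ℂ) • z), z), ⟨(hhalf z hz).2, hz, ?_⟩, hzne⟩
        show -((1/2 : ℂ) • z) + z ∈ Bε
        have : -((1/2 : ℂ) • z) + z = (1/2 : ℂ) • z := by module
        rw [this]
        exact (hhalf z hz).1
    have hptwise : ∀ w ∈ DS, A w * ∏ i, FF i w = 0 := by
      intro w hw
      by_cases hzz : ∃ i, FF i w = 0
      · obtain ⟨i, hi⟩ := hzz
        rw [Finset.prod_eq_zero (Finset.mem_univ i) hi, mul_zero]
      · push_neg at hzz
        rw [hAgood w hw (fun j => hzz (some (Sum.inl j))) (fun j => hzz (some (Sum.inr j)))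
          (hzz none), zero_mul]
    exact aux_prod_zero hDSo hDSc Finset.univ FF hFFan hFFnz hAan hptwise
  -- choice of N
  refine ⟨P.totalDegree + 1, ?_⟩
  intro k hk
  set N := P.totalDegree + 1 with hNdef
  have hknorm : ‖k‖ < ε := by rwa [hBεdef, mem_ball_zero_iff] at hk
  set δ : ℝ := ε - ‖k‖ with hδdef
  have hδpos : 0 < δ := by simp [hδdef]; linarith
  have hsub : ∀ u : Fin n → ℂ, u ∈ ball (0 : Fin n → ℂ) δ → u ∈ Bε ∧ u + k ∈ Bε := by
    intro u hu
    rw [mem_ball_zero_iff] at hu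
    constructor
    · rw [hBεdef, mem_ball_zero_iff]
      have : ‖k‖ ≥ 0 := norm_nonneg k
      linarith
    · rw [hBεdef, mem_ball_zero_iff]
      calc ‖u + k‖ ≤ ‖u‖ + ‖k‖ := norm_add_le u k
        _ < δ + ‖k‖ := by linarith
        _ = ε := by simp [hδdef]
  -- grouped coefficient functions
  set J : Finset ((Fin m → ℕ) × ℕ) :=
    P.support.image (fun s => ((fun j => s (Sum.inl (Sum.inl j))), s (Sum.inr ()))) with hJdef
  set Kg : ((Fin m → ℕ) × ℕ) → (Fin n → ℂ) → ℂ := fun p v =>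
    ∑ s ∈ P.support.filter
        (fun s => ((fun j => s (Sum.inl (Sum.inl j))), s (Sum.inr ())) = p),
      P.coeff s * ∏ j, φnum j v ^ s (Sum.inl (Sum.inr j)) *
        φden j v ^ (e j - s (Sum.inl (Sum.inr j))) with hKgdef
  have hKgan : ∀ p, AnalyticOnNhd ℂ (Kg p) Bε := by
    intro p v hv
    simp only [hKgdef]
    apply Finset.analyticAt_fun_sum
    intro s _
    apply analyticAt_const.mul
    apply Finset.analyticAt_fun_prod
    intro j _
    exact ((hφn j v hv).pow _).mul ((hφd j v hv).pow _)
  obtain ⟨s₀, hs₀⟩ : ∃ s, s ∈ P.support := by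
    rcases Finset.eq_empty_or_nonempty P.support with hemp | hne
    · exact absurd (MvPolynomial.support_eq_empty.mp hemp) hP
    · exact hne
  set p₀ : (Fin m → ℕ) × ℕ :=
    ((fun j => s₀ (Sum.inl (Sum.inl j))), s₀ (Sum.inr ())) with hp₀def
  have hp₀J : p₀ ∈ J := Finset.mem_image_of_mem _ hs₀
  have hk'ex : ∃ k' ∈ Bε, Kg p₀ k' ≠ 0 := by
    by_contra hcon
    push_neg at hcon
    set Tp : MvPolynomial (Fin m) ℂ :=
      ∑ s ∈ P.support.filter
          (fun s => ((fun j => s (Sum.inl (Sum.inl j))), s (Sum.inr ())) = p₀),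
        monomial (Finsupp.equivFunOnFinite.symm (fun j => s (Sum.inl (Sum.inr j))))
          (P.coeff s) with hTpdef
    have hTpeval : ∀ z ∈ Bε, (∀ i, φden i z ≠ 0) →
        eval (fun i => φnum i z / φden i z) Tp = 0 := by
      intro z hz hdz
      have hclear : Kg p₀ z = (∏ j, φden j z ^ e j) *
          eval (fun i => φnum i z / φden i z) Tp := by
        simp only [hKgdef, hTpdef]
        rw [map_sum, Finset.mul_sum]
        refine Finset.sum_congr rfl fun s hs => ?_
        rw [eval_monomial, Finsupp.prod_pow]
        simp only [Finsupp.coe_equivFunOnFinite_symm]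
        rw [aux_block_clear hdz (hsV s (Finset.mem_filter.mp hs).1)]
        ring
      have h0 := hcon z hz
      rw [h0] at hclear
      have hne : (∏ j, φden j z ^ e j) ≠ 0 :=
        Finset.prod_ne_zero_iff.mpr fun j _ => pow_ne_zero _ (hdz j)
      exact (mul_eq_zero.mp hclear.symm).resolve_left hne
    have hTp0 : Tp = 0 := hindep Tp hTpeval
    have hcoeff : coeff (Finsupp.equivFunOnFinite.symm (fun j => s₀ (Sum.inl (Sum.inr j)))) Tp
        = P.coeff s₀ := by
      simp only [hTpdef]
      rw [MvPolynomial.coeff_sum]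
      rw [Finset.sum_eq_single s₀]
      · rw [coeff_monomial, if_pos rfl]
      · intro s hs hne
        rw [coeff_monomial, if_neg]
        intro heq
        apply hne
        obtain ⟨hsup, hmap⟩ := Finset.mem_filter.mp hs
        have hVpart : ∀ j, s (Sum.inl (Sum.inr j)) = s₀ (Sum.inl (Sum.inr j)) := by
          intro j
          have h2 : (fun j => s (Sum.inl (Sum.inr j))) = (fun j => s₀ (Sum.inl (Sum.inr j))) :=
            Finsupp.equivFunOnFinite.symm.injective heq
          exact congrFun h2 j
        have hXpart : (fun j => s (Sum.inl (Sum.inl j))) =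
            (fun j => s₀ (Sum.inl (Sum.inl j))) :=
          congrArg Prod.fst (hmap.trans hp₀def)
        have hYpart : s (Sum.inr ()) = s₀ (Sum.inr ()) :=
          congrArg Prod.snd (hmap.trans hp₀def)
        apply Finsupp.ext
        intro i
        match i with
        | Sum.inl (Sum.inl j) => exact congrFun hXpart j
        | Sum.inl (Sum.inr j) => exact hVpart j
        | Sum.inr () => exact hYpart
      · intro hnotin
        exact absurd (Finset.mem_filter.mpr ⟨hs₀, hp₀def.symm⟩ : s₀ ∈ P.support.filter
          (fun s => ((fun j => s (Sum.inl (Sum.inl j))), s (Sum.inr ())) = p₀)) hnotin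
    rw [hTp0, coeff_zero] at hcoeff
    exact (mem_support_iff.mp hs₀) hcoeff.symm
  obtain ⟨k', hk'B, hk'⟩ := hk'ex
  set wv : Fin n → ℂ := k' - k with hwvdef
  set line : ℂ → (Fin n → ℂ) := fun t => k + t • wv with hlinedef
  have hline0 : line 0 = k := by simp [hlinedef]
  have hline1 : line 1 = k' := by simp [hlinedef, hwvdef]
  set T : Set ℂ := line ⁻¹' Bε with hTdef
  have hTo : IsOpen T := hBo.preimage (by fun_prop)
  have hTc : IsPreconnected T := by
    refine Convex.isPreconnected ?_
    intro x hx y hy a b ha hb hab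
    have heq : line (a • x + b • y) = a • line x + b • line y := by
      simp only [hlinedef, smul_add, add_smul, ← smul_assoc]
      conv_lhs => rw [← Convex.combo_self hab k]
      abel
    simp only [Set.mem_preimage, hTdef] at hx hy ⊢
    rw [heq]
    exact (convex_ball (0 : Fin n → ℂ) ε) hx hy ha hb hab
  have h0T : (0 : ℂ) ∈ T := by simpa [hTdef, hline0] using hk
  have h1T : (1 : ℂ) ∈ T := by simpa [hTdef, hline1] using hk'B
  have hline_an : ∀ t : ℂ, AnalyticAt ℂ line t := by
    intro t
    apply analyticAt_const.add
    exact (analyticAt_id).smul analyticAt_const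
  set Gp : ((Fin m → ℕ) × ℕ) → ℂ → ℂ := fun p t => Kg p (line t) with hGpdef
  have hGpan : ∀ p, ∀ t ∈ T, AnalyticAt ℂ (Gp p) t :=
    fun p t ht => (hKgan p (line t) ht).comp (hline_an t)
  have hGp0 : ∀ p, AnalyticAt ℂ (Gp p) 0 := fun p => hGpan p 0 h0T
  set o : ((Fin m → ℕ) × ℕ) → ℕ∞ := fun p => analyticOrderAt (Gp p) 0 with hodef
  have hop₀ : o p₀ ≠ ⊤ := by
    intro htop
    have hev : ∀ᶠ t in 𝓝 (0 : ℂ), Gp p₀ t = 0 := analyticOrderAt_eq_top.mp htop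
    have hGpOn : AnalyticOnNhd ℂ (Gp p₀) T := fun t ht => hGpan p₀ t ht
    have := hGpOn.eqOn_zero_of_preconnected_of_eventuallyEq_zero hTc h0T hev h1T
    rw [Pi.zero_apply] at this
    simp only [hGpdef, hline1] at this
    exact hk' this
  set O : ℕ∞ := J.inf o with hOdef
  have hOne : O ≠ ⊤ := fun htop => hop₀ (top_le_iff.mp (htop ▸ Finset.inf_le hp₀J))
  obtain ⟨r, hr⟩ : ∃ r : ℕ, (r : ℕ∞) = O := WithTop.ne_top_iff_exists.mp hOne
  obtain ⟨pstar, hpstarJ, hpstar⟩ : ∃ p ∈ J, J.inf o = o p :=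
    Finset.exists_mem_eq_inf J ⟨p₀, hp₀J⟩ o
  have hfact : ∀ p ∈ J, ∃ Hp : ℂ → ℂ, AnalyticAt ℂ Hp 0 ∧ (o p = (r : ℕ∞) → Hp 0 ≠ 0) ∧
      ∀ᶠ t in 𝓝 (0 : ℂ), Gp p t = t ^ r * Hp t := by
    intro p hpJ
    have hrle : (r : ℕ∞) ≤ o p := by rw [hr]; exact Finset.inf_le hpJ
    rcases eq_or_ne (o p) ⊤ with htop | hne
    · refine ⟨0, analyticAt_const, ?_, ?_⟩
      · intro hcontra; rw [htop] at hcontra; exact absurd hcontra.symm (by simp)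
      · filter_upwards [analyticOrderAt_eq_top.mp htop] with t ht
        simp [ht]
    · obtain ⟨nn, hnn⟩ := WithTop.ne_top_iff_exists.mp hne
      have hrn : r ≤ nn := by
        rw [← hnn] at hrle; exact WithTop.coe_le_coe.mp hrle
      obtain ⟨g, hgan, hg0, hev⟩ := (hGp0 p).analyticOrderAt_eq_natCast.mp hnn.symm
      refine ⟨fun t => t ^ (nn - r) * g t, ((analyticAt_id).pow _).mul hgan, ?_, ?_⟩
      · intro hor
        have hnr : nn = r := WithTop.coe_inj.mp (hnn.trans hor)
        simpa [hnr] using hg0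
      · filter_upwards [hev] with t ht
        rw [ht, sub_zero, smul_eq_mul, ← mul_assoc, ← pow_add, Nat.add_sub_cancel' hrn]
  choose! HH hHan hHnz hHev using hfact
  set H0 : ((Fin m → ℕ) × ℕ) → ℂ := fun p => HH p 0 with hH0def
  have hH0star : H0 pstar ≠ 0 := by
    refine hHnz pstar hpstarJ ?_
    rw [← hpstar, ← hOdef, ← hr]
  -- the polynomials
  set c : ℕ → MvPolynomial (Fin m) ℂ := fun i =>
    ∑ p ∈ J.filter (fun p => p.2 = i),
      monomial (Finsupp.equivFunOnFinite.symm p.1) (H0 p) with hcdef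
  have hceval : ∀ (u' : Fin n → ℂ) (i : ℕ),
      eval (fun j => φnum j u' / φden j u') (c i) =
      ∑ p ∈ J.filter (fun p => p.2 = i),
        H0 p * ∏ j, (φnum j u' / φden j u') ^ p.1 j := by
    intro u' i
    simp only [hcdef]
    rw [map_sum]
    refine Finset.sum_congr rfl fun p _ => ?_
    rw [eval_monomial, Finsupp.prod_pow]
    simp only [Finsupp.coe_equivFunOnFinite_symm, hH0def]
  have hpJbound : ∀ p ∈ J, (∀ j, p.1 j ≤ d j) ∧ p.2 ≤ dY := by
    intro p hp
    rw [hJdef] at hp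
    obtain ⟨s, hs, rfl⟩ := Finset.mem_image.mp hp
    exact ⟨fun j => hsX s hs j, hsY s hs⟩
  have hdegle : ∀ i jj, (c i).degreeOf jj ≤ N := by
    intro i jj
    rw [degreeOf_eq_sup]
    apply Finset.sup_le
    intro b hb
    simp only [hcdef] at hb
    have hb' := MvPolynomial.support_sum hb
    rw [Finset.mem_biUnion] at hb'
    obtain ⟨p, hpf, hbp⟩ := hb'
    have hbs := MvPolynomial.support_monomial_subset hbp
    rw [Finset.mem_singleton] at hbs
    rw [hbs]
    have hpJ : p ∈ J := (Finset.mem_filter.mp hpf).1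
    calc (Finsupp.equivFunOnFinite.symm p.1) jj = p.1 jj := by
          simp [Finsupp.coe_equivFunOnFinite_symm]
      _ ≤ d jj := (hpJbound p hpJ).1 jj
      _ ≤ P.totalDegree := degreeOf_le_totalDegree P _
      _ ≤ N := Nat.le_succ _
  have hcstar : c pstar.2 ≠ 0 := by
    intro hzero
    have hco : coeff (Finsupp.equivFunOnFinite.symm pstar.1) (c pstar.2) = H0 pstar := by
      simp only [hcdef]
      rw [MvPolynomial.coeff_sum]
      rw [Finset.sum_eq_single pstar]
      · rw [coeff_monomial, if_pos rfl]
      · intro p hp hne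
        rw [coeff_monomial, if_neg]
        intro heq
        apply hne
        have h1 : p.1 = pstar.1 := Finsupp.equivFunOnFinite.symm.injective heq
        have h2 : p.2 = pstar.2 := (Finset.mem_filter.mp hp).2
        exact Prod.ext h1 h2
      · intro hnot
        exact absurd (Finset.mem_filter.mpr ⟨hpstarJ, rfl⟩ :
          pstar ∈ J.filter (fun p => p.2 = pstar.2)) hnot
    rw [hzero, coeff_zero] at hco
    exact hH0star hco.symm
  -- grouping identity
  have hgroup : ∀ (u' : Fin n → ℂ) (W : ℕ → ℂ),
      ∑ i ∈ Finset.range (dY + 1), eval (fun j => φnum j u' / φden j u') (c i) * W i =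
      ∑ p ∈ J, H0 p * ((∏ j, (φnum j u' / φden j u') ^ p.1 j) * W p.2) := by
    intro u' W
    have hmaps : ∀ p ∈ J, p.2 ∈ Finset.range (dY + 1) := fun p hp =>
      Finset.mem_range.mpr (Nat.lt_succ_of_le (hpJbound p hp).2)
    rw [← Finset.sum_fiberwise_of_maps_to hmaps
      (fun p => H0 p * ((∏ j, (φnum j u' / φden j u') ^ p.1 j) * W p.2))]
    refine Finset.sum_congr rfl fun i hi => ?_
    rw [hceval, Finset.sum_mul]
    refine Finset.sum_congr rfl fun p hp => ?_
    have h2 : p.2 = i := (Finset.mem_filter.mp hp).2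
    rw [h2, mul_assoc]
  -- the key analytic limit relation
  have hkeyAll : ∀ u ∈ ball (0 : Fin n → ℂ) δ, (∀ j, φden j u ≠ 0) →
      ∑ p ∈ J, H0 p * ((∏ j, (φnum j u / φden j u) ^ p.1 j) *
        (α (u, k) ^ p.2 * β (u, k) ^ (dY - p.2))) = 0 := by
    intro u hu hdu
    obtain ⟨huB, hukB⟩ := hsub u hu
    set Φ : ((Fin m → ℕ) × ℕ) → ℂ → ℂ := fun p t =>
      (∏ j, (φnum j u / φden j u) ^ p.1 j) *
        (α (u, line t) ^ p.2 * β (u, line t) ^ (dY - p.2)) with hΦdef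
    set F : ℂ → ℂ := fun t => ∑ p ∈ J, Gp p t * Φ p t with hFdef
    have hdne : (∏ j, φden j u ^ d j) ≠ 0 :=
      Finset.prod_ne_zero_iff.mpr fun j _ => pow_ne_zero _ (hdu j)
    have hTu : ∀ t : ℂ, t ∈ T → u + line t ∈ Bε → F t = 0 := by
      intro t ht hut
      have hAz : A (u, line t) = 0 := hA0 (u, line t) ⟨huB, ht, hut⟩
      have hclear : (∏ j, φden j u ^ d j) * F t = A (u, line t) := by
        simp only [hFdef, hGpdef, hKgdef, hΦdef, hAdef]
        rw [Finset.mul_sum]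
        rw [← Finset.sum_fiberwise_of_maps_to
            (fun s (hs : s ∈ P.support) => Finset.mem_image_of_mem
              (fun s => ((fun j => s (Sum.inl (Sum.inl j))), s (Sum.inr ()))) hs)
            (fun s => P.coeff s *
              ((∏ j, φnum j (u, line t).1 ^ s (Sum.inl (Sum.inl j)) *
                φden j (u, line t).1 ^ (d j - s (Sum.inl (Sum.inl j)))) *
               ((∏ j, φnum j (u, line t).2 ^ s (Sum.inl (Sum.inr j)) *
                φden j (u, line t).2 ^ (e j - s (Sum.inl (Sum.inr j)))) *
                (α (u, line t) ^ s (Sum.inr ()) *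
                  β (u, line t) ^ (dY - s (Sum.inr ()))))))]
        refine Finset.sum_congr rfl fun p hp => ?_
        rw [Finset.sum_mul, Finset.mul_sum]
        refine Finset.sum_congr rfl fun s hs => ?_
        obtain ⟨hsup, hmap⟩ := Finset.mem_filter.mp hs
        have h1 : p.1 = fun j => s (Sum.inl (Sum.inl j)) := (congrArg Prod.fst hmap).symm
        have h2 : p.2 = s (Sum.inr ()) := (congrArg Prod.snd hmap).symm
        simp only [h1, h2]
        rw [aux_block_clear hdu (hsX s hsup)]
        ring
      rw [hAz] at hclear
      exact (mul_eq_zero.mp hclear).resolve_left hdne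
    have hevfac : ∀ᶠ t in 𝓝 (0 : ℂ), F t = t ^ r * ∑ p ∈ J, HH p t * Φ p t := by
      have hall : ∀ᶠ t in 𝓝 (0 : ℂ), ∀ p ∈ J, Gp p t = t ^ r * HH p t :=
        (Finset.eventually_all J).mpr (fun p hp => hHev p hp)
      filter_upwards [hall] with t hGt
      simp only [hFdef]
      rw [Finset.mul_sum]
      refine Finset.sum_congr rfl fun p hp => ?_
      rw [hGt p hp]; ring
    have hevT : ∀ᶠ t in 𝓝 (0 : ℂ), t ∈ T ∧ u + line t ∈ Bε := by
      have h1 : ∀ᶠ t in 𝓝 (0 : ℂ), t ∈ T :=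
        eventually_of_mem (hTo.mem_nhds h0T) (fun t ht => ht)
      have hcont : ContinuousAt (fun t : ℂ => u + line t) 0 := by
        apply ContinuousAt.add continuousAt_const
        simp only [hlinedef]
        exact (continuousAt_const.add ((continuous_id.smul continuous_const).continuousAt))
      have h2 : ∀ᶠ t in 𝓝 (0 : ℂ), u + line t ∈ Bε := by
        apply hcont.eventually_mem
        apply hBo.mem_nhds
        rw [hline0]
        exact hukB
      exact h1.and h2
    set Fh : ℂ → ℂ := fun t => ∑ p ∈ J, HH p t * Φ p t with hFhdef
    have hev0 : ∀ᶠ t in 𝓝 (0 : ℂ), t ^ r * Fh t = 0 := by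
      filter_upwards [hevfac, hevT] with t h1 h2
      rw [← h1]; exact hTu t h2.1 h2.2
    have hΦan : ∀ p, AnalyticAt ℂ (Φ p) 0 := by
      intro p
      simp only [hΦdef]
      apply analyticAt_const.mul
      have hmemuk : (u, line 0) ∈ {w : (Fin n → ℂ) × (Fin n → ℂ) | w.1 + w.2 ∈ Bε} := by
        show u + line 0 ∈ Bε
        rw [hline0]; exact hukB
      have hpan : AnalyticAt ℂ (fun t : ℂ => (u, line t)) 0 :=
        analyticAt_const.prod (hline_an 0)
      have hαan : AnalyticAt ℂ (fun t : ℂ => α (u, line t)) 0 :=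
        AnalyticAt.comp (f := fun t : ℂ => (u, line t)) (hαa (u, line 0) hmemuk) hpan
      have hβan : AnalyticAt ℂ (fun t : ℂ => β (u, line t)) 0 :=
        AnalyticAt.comp (f := fun t : ℂ => (u, line t)) (hβa (u, line 0) hmemuk) hpan
      exact (hαan.pow _).mul (hβan.pow _)
    have hFh0 : Fh 0 = 0 := by
      have hne : ∀ᶠ t in 𝓝[≠] (0 : ℂ), Fh t = 0 := by
        filter_upwards [eventually_nhdsWithin_of_eventually_nhds hev0,
          self_mem_nhdsWithin] with t h1 h2
        exact (mul_eq_zero.mp h1).resolve_left (pow_ne_zero _ h2)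
      have hcont : ContinuousAt Fh 0 := by
        have : AnalyticAt ℂ Fh 0 := by
          simp only [hFhdef]
          exact Finset.analyticAt_fun_sum J (fun p hp => (hHan p hp).mul (hΦan p))
        exact this.continuousAt
      have htend1 : Filter.Tendsto Fh (𝓝[≠] (0 : ℂ)) (𝓝 (Fh 0)) :=
        hcont.continuousWithinAt.tendsto
      have htend2 : Filter.Tendsto Fh (𝓝[≠] (0 : ℂ)) (𝓝 0) :=
        Filter.Tendsto.congr' (Filter.EventuallyEq.symm hne) tendsto_const_nhds
      exact tendsto_nhds_unique htend1 htend2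
    have hΦ0 : ∀ p, Φ p 0 = (∏ j, (φnum j u / φden j u) ^ p.1 j) *
        (α (u, k) ^ p.2 * β (u, k) ^ (dY - p.2)) := by
      intro p
      simp only [hΦdef, hline0]
    simp only [hFhdef, hΦ0, hH0def] at hFh0 ⊢
    exact hFh0
  -- the polynomial relation with division by β^dY
  have hSrel : ∀ u ∈ ball (0 : Fin n → ℂ) δ, (∀ j, φden j u ≠ 0) → β (u, k) ≠ 0 →
      ∑ i ∈ Finset.range (dY + 1), eval (fun j => φnum j u / φden j u) (c i) *
        (α (u, k) / β (u, k)) ^ i = 0 := by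
    intro u hu hdu hbu
    have hkey := hkeyAll u hu hdu
    rw [hgroup u]
    have h1 : (∑ p ∈ J, H0 p * ((∏ j, (φnum j u / φden j u) ^ p.1 j) *
        (α (u, k) / β (u, k)) ^ p.2)) * β (u, k) ^ dY = 0 := by
      rw [Finset.sum_mul]
      calc ∑ p ∈ J, H0 p * ((∏ j, (φnum j u / φden j u) ^ p.1 j) *
              (α (u, k) / β (u, k)) ^ p.2) * β (u, k) ^ dY
          = ∑ p ∈ J, H0 p * ((∏ j, (φnum j u / φden j u) ^ p.1 j) *
              (α (u, k) ^ p.2 * β (u, k) ^ (dY - p.2))) := by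
            refine Finset.sum_congr rfl fun p hp => ?_
            rw [aux_pow_clear hbu (hpJbound p hp).2]
            ring
        _ = 0 := hkey
    exact (mul_eq_zero.mp h1).resolve_right (pow_ne_zero _ hbu)
  -- h := largest index with nonzero coefficient polynomial
  set h : ℕ := Nat.findGreatest (fun i => c i ≠ 0) dY with hhdef
  have hstarle : pstar.2 ≤ dY := (hpJbound pstar hpstarJ).2
  have hch : c h ≠ 0 := Nat.findGreatest_spec (P := fun i => c i ≠ 0) hstarle hcstar
  have hhle : h ≤ dY := Nat.findGreatest_le (P := fun i => c i ≠ 0) dY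
  have hcabove : ∀ i, h < i → i ≤ dY → c i = 0 := by
    intro i h1 h2
    by_contra hne
    exact (Nat.findGreatest_is_greatest (P := fun i => c i ≠ 0) h1 h2) hne
  have hhpos : 1 ≤ h := by
    rcases Nat.eq_zero_or_pos h with hzero | hpos
    swap
    · exact hpos
    exfalso
    have hc0 : c 0 ≠ 0 := by rw [← hzero]; exact hch
    have hcz : ∀ i, 1 ≤ i → i ≤ dY → c i = 0 := fun i h1 h2 =>
      hcabove i (by omega) h2
    have hrel : ∀ u ∈ ball (0 : Fin n → ℂ) δ, (∀ j, φden j u ≠ 0) →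
        eval (fun j => φnum j u / φden j u) (c 0) * β (u, k) ^ dY = 0 := by
      intro u hu hdu
      have hkey := hkeyAll u hu hdu
      rw [← hgroup u (fun i => α (u, k) ^ i * β (u, k) ^ (dY - i))] at hkey
      have hsingle : ∑ i ∈ Finset.range (dY + 1),
          eval (fun j => φnum j u / φden j u) (c i) *
            (α (u, k) ^ i * β (u, k) ^ (dY - i)) =
          eval (fun j => φnum j u / φden j u) (c 0) *
            (α (u, k) ^ 0 * β (u, k) ^ (dY - 0)) := by
        apply Finset.sum_eq_single 0
        · intro i hi hne
          have h1 : 1 ≤ i := Nat.one_le_iff_ne_zero.mpr hne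
          have h2 : i ≤ dY := by
            rw [Finset.mem_range] at hi; omega
          rw [hcz i h1 h2, map_zero, zero_mul]
        · intro h0'
          exact absurd (Finset.mem_range.mpr (by omega)) h0'
      rw [hsingle] at hkey
      simpa using hkey
    set Ψ : (Fin n → ℂ) → ℂ := fun z =>
      ∑ p ∈ J.filter (fun p => p.2 = 0), H0 p *
        ∏ j, φnum j z ^ p.1 j * φden j z ^ (d j - p.1 j) with hΨdef
    have hΨan : AnalyticOnNhd ℂ Ψ Bε := by
      intro z hz
      simp only [hΨdef]
      apply Finset.analyticAt_fun_sum
      intro p _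
      apply analyticAt_const.mul
      apply Finset.analyticAt_fun_prod
      intro j _
      exact ((hφn j z hz).pow _).mul ((hφd j z hz).pow _)
    have hΨclear : ∀ z, (∀ j, φden j z ≠ 0) →
        Ψ z = (∏ j, φden j z ^ d j) * eval (fun j => φnum j z / φden j z) (c 0) := by
      intro z hdz
      simp only [hΨdef]
      rw [hceval, Finset.mul_sum]
      refine Finset.sum_congr rfl fun p hp => ?_
      rw [aux_block_clear hdz ((hpJbound p (Finset.mem_filter.mp hp).1).1)]
      ring
    have hU₀o : IsOpen (ball (0 : Fin n → ℂ) δ) := isOpen_ball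
    have hU₀c : IsPreconnected (ball (0 : Fin n → ℂ) δ) :=
      (convex_ball (0 : Fin n → ℂ) δ).isPreconnected
    have hU₀B : ball (0 : Fin n → ℂ) δ ⊆ Bε := fun z hz => (hsub z hz).1
    set FF2 : Option (Fin m) → (Fin n → ℂ) → ℂ := fun oo z =>
      Option.elim oo (β (z, k)) (fun j => φden j z) with hFF2def
    have hFF2an : ∀ i ∈ (Finset.univ : Finset (Option (Fin m))),
        AnalyticOnNhd ℂ (FF2 i) (ball (0 : Fin n → ℂ) δ) := by
      intro i _
      match i with
      | none =>
        intro z hz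
        have hmem : (z, k) ∈ {w : (Fin n → ℂ) × (Fin n → ℂ) | w.1 + w.2 ∈ Bε} :=
          (hsub z hz).2
        exact AnalyticAt.comp (f := fun z : Fin n → ℂ => (z, k)) (hβa (z, k) hmem)
          (analyticAt_id.prod analyticAt_const)
      | some j => exact fun z hz => hφd j z (hU₀B hz)
    have hFF2nz : ∀ i ∈ (Finset.univ : Finset (Option (Fin m))),
        ∃ x ∈ ball (0 : Fin n → ℂ) δ, FF2 i x ≠ 0 := by
      intro i _
      match i with
      | none =>
        set Uk : Set (Fin n → ℂ) := {z | z + k ∈ Bε} with hUkdef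
        have hUko : IsOpen Uk := hBo.preimage (continuous_id.add continuous_const)
        have hUkc : IsPreconnected Uk := by
          refine Convex.isPreconnected ?_
          intro x hx y hy a b ha hb hab
          simp only [hUkdef, Set.mem_setOf_eq] at hx hy ⊢
          have heq : (a • x + b • y) + k = a • (x + k) + b • (y + k) := by
            rw [smul_add, smul_add]
            conv_lhs => rw [← Convex.combo_self hab k]
            abel
          rw [heq]
          exact (convex_ball (0 : Fin n → ℂ) ε) hx hy ha hb hab
        have hsubk : ball (0 : Fin n → ℂ) δ ⊆ Uk := fun z hz => (hsub z hz).2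
        have hβsan : AnalyticOnNhd ℂ (fun z => β (z, k)) Uk := fun z hz =>
          AnalyticAt.comp (f := fun z : Fin n → ℂ => (z, k)) (hβa (z, k) hz)
            (analyticAt_id.prod analyticAt_const)
        obtain ⟨u₀, hu₀, hbu₀⟩ := hslice k hk
        exact aux_not_ae_zero hUkc hU₀o hsubk (mem_ball_self hδpos) hβsan ⟨u₀, hu₀, hbu₀⟩
      | some j =>
        exact aux_not_ae_zero hBc hU₀o hU₀B (mem_ball_self hδpos) (hφd j) (hφdz j)
    have hptz : ∀ z ∈ ball (0 : Fin n → ℂ) δ, Ψ z * ∏ i, FF2 i z = 0 := by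
      intro z hz
      by_cases hzz : ∃ i, FF2 i z = 0
      · obtain ⟨i, hi⟩ := hzz
        rw [Finset.prod_eq_zero (Finset.mem_univ i) hi, mul_zero]
      · push_neg at hzz
        have hdz : ∀ j, φden j z ≠ 0 := fun j => hzz (some j)
        have hbz : β (z, k) ≠ 0 := hzz none
        have h1 := hrel z hz hdz
        have h2 : eval (fun j => φnum j z / φden j z) (c 0) = 0 :=
          (mul_eq_zero.mp h1).resolve_right (pow_ne_zero _ hbz)
        rw [hΨclear z hdz, h2, mul_zero, zero_mul]
    have hΨ0 : ∀ z ∈ ball (0 : Fin n → ℂ) δ, Ψ z = 0 :=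
      aux_prod_zero hU₀o hU₀c Finset.univ FF2 hFF2an hFF2nz
        (fun z hz => hΨan z (hU₀B hz)) hptz
    have hΨB : ∀ z ∈ Bε, Ψ z = 0 := by
      have hev : Ψ =ᶠ[𝓝 (0 : Fin n → ℂ)] 0 :=
        eventually_of_mem (hU₀o.mem_nhds (mem_ball_self hδpos)) hΨ0
      exact fun z hz =>
        hΨan.eqOn_zero_of_preconnected_of_eventuallyEq_zero hBc h0B hev hz
    apply hc0
    apply hindep
    intro z hz hdz
    have h1 := hΨB z hz
    rw [hΨclear z hdz] at h1
    exact (mul_eq_zero.mp h1).resolve_left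
      (Finset.prod_ne_zero_iff.mpr fun j _ => pow_ne_zero _ (hdz j))
  refine ⟨h, hhpos, by
      calc h ≤ dY := hhle
        _ ≤ P.totalDegree := degreeOf_le_totalDegree P _
        _ ≤ N := Nat.le_succ _,
    fun i => c i, fun _ => c h, fun i j => ⟨hdegle _ _, hdegle _ _⟩, ?_, δ, hδpos, ?_⟩
  · intro i
    by_contra hcon
    push_neg at hcon
    exact hch (hindep (c h) hcon)
  · intro u hu hukB hdenu hβu hSne
    have hchne : eval (fun j => φnum j u / φden j u) (c h) ≠ 0 := hSne ⟨0, hhpos⟩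
    have hrel := hSrel u hu hdenu hβu
    have htrunc : ∑ i ∈ Finset.range (h + 1), eval (fun j => φnum j u / φden j u) (c i) *
        (α (u, k) / β (u, k)) ^ i = 0 := by
      rw [Finset.sum_subset (Finset.range_subset_range.mpr (by omega : h + 1 ≤ dY + 1))
        (fun i hi1 hi2 => ?_)]
      · exact hrel
      · have h1 : h < i := by
          rw [Finset.mem_range] at hi2; omega
        have h2 : i ≤ dY := by
          rw [Finset.mem_range] at hi1; omega
        rw [hcabove i h1 h2, map_zero, zero_mul]
    set γ : ℕ → ℂ := fun i => eval (fun j => φnum j u / φden j u) (c i) with hγdef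
    set f0 : ℂ := α (u, k) / β (u, k) with hf0def
    have hexp : γ h * ((f0 : ℂ) ^ h + ∑ i : Fin h, (γ i / γ h) * f0 ^ (i : ℕ)) =
        ∑ i ∈ Finset.range (h + 1), γ i * f0 ^ i := by
      rw [Finset.sum_range_succ, mul_add, Finset.mul_sum,
        Fin.sum_univ_eq_sum_range (fun i => γ h * ((γ i / γ h) * f0 ^ i)) h, add_comm]
      congr 1
      refine Finset.sum_congr rfl fun i _ => ?_
      have hγh : γ h ≠ 0 := hchne
      field_simp
    have hfin : γ h * ((f0 : ℂ) ^ h + ∑ i : Fin h, (γ i / γ h) * f0 ^ (i : ℕ)) = 0 :=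
      hexp.trans htrunc
    exact (mul_eq_zero.mp hfin).resolve_left hchne
end

section
/- Let ε > 0 and let φ₁, …, φ_m be meromorphic functions on B_n(ε). Suppose the differentials dφ₁, …, dφ_m are linearly independent over the field of meromorphic functions on B_n(ε), i.e. whenever g₁, …, g_m are meromorphic on B_n(ε) with ∑_{i=1}^m gᵢ · ∂ⱼφᵢ = 0 as meromorphic functions for every j = 1, …, n, then every gᵢ = 0. Then φ₁, …, φ_m are algebraically independent over ℂ. -/
open Metric MvPolynomial

/-- The `j`-th (complex) partial derivative of `F : ℂⁿ → ℂ` at `z`. -/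
noncomputable def pderivAt (n : ℕ) (j : Fin n) (F : (Fin n → ℂ) → ℂ) (z : Fin n → ℂ) : ℂ :=
  fderiv ℂ F z (Pi.single j 1)

/-- The `j`-th partial derivative of the meromorphic function `num/den`:
`∂ⱼ(num/den) = (den·∂ⱼnum − num·∂ⱼden)/den²`. -/
noncomputable def meroPDeriv (n : ℕ) (num den : (Fin n → ℂ) → ℂ) (j : Fin n)
    (z : Fin n → ℂ) : ℂ :=
  (den z * pderivAt n j num z - num z * pderivAt n j den z) / (den z) ^ 2

open Finsupp Topology Filter

lemma coeff_pderiv' {m : ℕ} (i : Fin m) (Q : MvPolynomial (Fin m) ℂ) (c : Fin m →₀ ℕ) :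
    coeff c (pderiv i Q) = (c i + 1 : ℂ) * coeff (c + Finsupp.single i 1) Q := by
  induction Q using MvPolynomial.induction_on' with
  | monomial s a =>
    rw [pderiv_monomial]
    by_cases hs : s = c + Finsupp.single i 1
    · subst hs
      simp [coeff_monomial, mul_comm]
    · rcases Nat.eq_zero_or_pos (s i) with h0 | h0
      · simp [coeff_monomial, h0, hs]
      · rw [coeff_monomial, coeff_monomial, if_neg hs, mul_zero, if_neg]
        intro hc
        apply hs
        have hle : Finsupp.single i 1 ≤ s := by
          rw [Finsupp.single_le_iff]; omega
        rw [← hc, tsub_add_cancel_of_le hle]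
  | add p q hp hq =>
    simp [map_add, coeff_add, hp, hq, mul_add]

lemma totalDegree_pderiv_le' {m : ℕ} (i : Fin m) (Q : MvPolynomial (Fin m) ℂ) (d : ℕ)
    (h : Q.totalDegree ≤ d + 1) : (pderiv i Q).totalDegree ≤ d := by
  rw [MvPolynomial.totalDegree]
  apply Finset.sup_le
  intro c hc
  rw [MvPolynomial.mem_support_iff, coeff_pderiv' i Q c] at hc
  have h2 : coeff (c + Finsupp.single i 1) Q ≠ 0 := by
    intro h0; exact hc (by rw [h0, mul_zero])
  have h3 := MvPolynomial.le_totalDegree (MvPolynomial.mem_support_iff.mpr h2)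
  rw [Finsupp.sum_add_index' (fun _ => rfl) (fun _ _ _ => rfl)] at h3
  simp only [Finsupp.sum_single_index] at h3
  omega

lemma eq_C_of_pderiv_eq_zero {m : ℕ} (Q : MvPolynomial (Fin m) ℂ)
    (h : ∀ i, pderiv i Q = 0) : Q = C (coeff 0 Q) := by
  ext c
  by_cases hc : c = 0
  · subst hc; simp
  · rw [MvPolynomial.coeff_C, if_neg (by exact fun hh => hc hh.symm)]
    obtain ⟨i, hi⟩ : ∃ i, c i ≠ 0 := by
      by_contra hall
      push_neg at hall
      exact hc (Finsupp.ext fun i => hall i)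
    obtain ⟨k, hk⟩ : ∃ k, c i = k + 1 := ⟨c i - 1, by omega⟩
    have := coeff_pderiv' i Q (c - Finsupp.single i 1)
    rw [h i] at this
    have hle : Finsupp.single i 1 ≤ c := by rw [Finsupp.single_le_iff]; omega
    rw [tsub_add_cancel_of_le hle] at this
    have hne : (((c - Finsupp.single i 1 : Fin m →₀ ℕ) i : ℕ) + 1 : ℂ) ≠ 0 :=
      Nat.cast_add_one_ne_zero _
    have := this.symm
    simp only [MvPolynomial.coeff_zero] at this
    rcases mul_eq_zero.mp this with h' | h'
    · exact absurd h' hne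
    · exact h'

lemma hasFDerivAt_div' {E : Type*} [NormedAddCommGroup E] [NormedSpace ℂ E]
    (a b : E → ℂ) (x : E) (ha : DifferentiableAt ℂ a x) (hb : DifferentiableAt ℂ b x)
    (hx : b x ≠ 0) :
    HasFDerivAt (fun z => a z / b z)
      (((b x) ^ 2)⁻¹ • (b x • fderiv ℂ a x - a x • fderiv ℂ b x)) x := by
  have h1 : HasFDerivAt (fun z => (b z)⁻¹)
      ((ContinuousLinearMap.smulRight (1 : ℂ →L[ℂ] ℂ) (-(b x ^ 2)⁻¹)).comp (fderiv ℂ b x)) x :=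
    (hasFDerivAt_inv hx).comp x hb.hasFDerivAt
  have h2 := ha.hasFDerivAt.mul h1
  have h3 : (fun z => a z * (b z)⁻¹) = fun z => a z / b z := by
    funext z; rw [div_eq_mul_inv]
  rw [show (a * fun z => (b z)⁻¹) = fun z => a z / b z from h3] at h2
  refine h2.congr_fderiv ?_
  ext v
  simp only [ContinuousLinearMap.smul_apply, ContinuousLinearMap.sub_apply,
    ContinuousLinearMap.add_apply, ContinuousLinearMap.comp_apply,
    ContinuousLinearMap.smulRight_apply, ContinuousLinearMap.one_apply, smul_eq_mul]
  field_simp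
  ring

lemma hasFDerivAt_mvpoly_eval {m : ℕ} {E : Type*} [NormedAddCommGroup E] [NormedSpace ℂ E]
    (Q : MvPolynomial (Fin m) ℂ) (Φ : E → Fin m → ℂ) (Φ' : Fin m → E →L[ℂ] ℂ) (z : E)
    (hΦ : ∀ i, HasFDerivAt (fun w => Φ w i) (Φ' i) z) :
    HasFDerivAt (fun w => eval (Φ w) Q) (∑ i : Fin m, eval (Φ z) (pderiv i Q) • Φ' i) z := by
  classical
  induction Q using MvPolynomial.induction_on with
  | C a =>
    have h1 : (fun w => eval (Φ w) (C a : MvPolynomial (Fin m) ℂ)) = fun _ => a := by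
      funext w; rw [eval_C]
    have h0 : (∑ i : Fin m, eval (Φ z) (pderiv i (C a : MvPolynomial (Fin m) ℂ)) • Φ' i)
        = (0 : E →L[ℂ] ℂ) := by
      ext v
      simp [pderiv_C]
    rw [h1, h0]
    exact hasFDerivAt_const a z
  | add p q hp hq =>
    have hadd := hp.add hq
    have heq : (fun w => eval (Φ w) p + eval (Φ w) q) = fun w => eval (Φ w) (p + q) := by
      funext w; rw [map_add]
    rw [show ((fun w => eval (Φ w) p) + fun w => eval (Φ w) q) = fun w => eval (Φ w) (p + q) from heq] at hadd
    have hE : (∑ i : Fin m, eval (Φ z) (pderiv i (p + q)) • Φ' i)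
        = (∑ i : Fin m, eval (Φ z) (pderiv i p) • Φ' i)
          + (∑ i : Fin m, eval (Φ z) (pderiv i q) • Φ' i) := by
      ext v
      simp [map_add, add_mul, Finset.sum_add_distrib]
    rw [hE]
    exact hadd
  | mul_X p i hp =>
    have hmul := hp.mul (hΦ i)
    have heq : (fun w => eval (Φ w) p * Φ w i) = fun w => eval (Φ w) (p * X i) := by
      funext w; rw [map_mul, eval_X]
    rw [show ((fun w => eval (Φ w) p) * fun w => Φ w i) = fun w => eval (Φ w) (p * X i) from heq] at hmul
    have hE : (∑ k : Fin m, eval (Φ z) (pderiv k (p * X i)) • Φ' k)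
        = eval (Φ z) p • Φ' i + Φ z i • ∑ k : Fin m, eval (Φ z) (pderiv k p) • Φ' k := by
      ext v
      simp only [ContinuousLinearMap.sum_apply, ContinuousLinearMap.smul_apply,
        ContinuousLinearMap.add_apply, smul_eq_mul, Finset.mul_sum]
      have hterm : ∀ k : Fin m, k ∈ Finset.univ →
          eval (Φ z) (pderiv k (p * X i)) * (Φ' k) v
          = Φ z i * (eval (Φ z) (pderiv k p) * (Φ' k) v)
            + (if i = k then eval (Φ z) p * (Φ' k) v else 0) := by
        intro k _
        rw [pderiv_mul, map_add, map_mul, map_mul, eval_X, pderiv_X]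
        by_cases h : i = k
        · subst h; simp; ring
        · simp [Pi.single_eq_of_ne (Ne.symm h), h]; ring
      rw [Finset.sum_congr rfl hterm, Finset.sum_add_distrib, Finset.sum_ite_eq,
        if_pos (Finset.mem_univ i)]
      ring
    rw [hE]
    exact hmul

lemma exists_forall_den_ne_zero {n m : ℕ} {ε : ℝ} (hε : 0 < ε)
    (φden : Fin m → (Fin n → ℂ) → ℂ)
    (hφd : ∀ i, AnalyticOnNhd ℂ (φden i) (ball (0 : Fin n → ℂ) ε))
    (hφdz : ∀ i, ∃ z ∈ ball (0 : Fin n → ℂ) ε, φden i z ≠ 0) :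
    ∃ z ∈ ball (0 : Fin n → ℂ) ε, ∀ i, φden i z ≠ 0 := by
  suffices H : ∀ s : Finset (Fin m), ∃ z ∈ ball (0 : Fin n → ℂ) ε, ∀ i ∈ s, φden i z ≠ 0 by
    obtain ⟨z, hz, h⟩ := H Finset.univ
    exact ⟨z, hz, fun i => h i (Finset.mem_univ i)⟩
  intro s
  induction s using Finset.induction with
  | empty => exact ⟨0, mem_ball_self hε, by simp⟩
  | @insert a s ha ih =>
    obtain ⟨z₀, hz₀, hs⟩ := ih
    by_contra hcon
    push_neg at hcon
    have hev : φden a =ᶠ[𝓝 z₀] 0 := by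
      have hball : ∀ᶠ z in 𝓝 z₀, z ∈ ball (0 : Fin n → ℂ) ε :=
        Filter.eventually_of_mem (isOpen_ball.mem_nhds hz₀) (fun z hz => hz)
      have hne : ∀ i ∈ s, ∀ᶠ z in 𝓝 z₀, φden i z ≠ 0 := fun i hi =>
        ((hφd i z₀ hz₀).continuousAt).eventually_ne (hs i hi)
      filter_upwards [hball, (Filter.eventually_all_finset s).mpr hne] with z hzb hzs
      obtain ⟨i, hi, h0⟩ := hcon z hzb
      rcases Finset.mem_insert.mp hi with rfl | hi'
      · exact h0
      · exact absurd h0 (hzs i hi')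
    have hzero := (hφd a).eqOn_zero_of_preconnected_of_eventuallyEq_zero
      ((convex_ball (0 : Fin n → ℂ) ε).isPreconnected) hz₀ hev
    obtain ⟨z₁, hz₁, hne1⟩ := hφdz a
    exact hne1 (hzero hz₁)

/-- Let `φ₁,…,φ_m` be meromorphic on `B_n(ε)`.  If the differentials
`dφ₁,…,dφ_m` are linearly independent over the field of meromorphic functions on `B_n(ε)`,
then `φ₁,…,φ_m` are algebraically independent over `ℂ`. -/
theorem statement7 (n m : ℕ) (hn : 1 ≤ n) (hm : 1 ≤ m) (ε : ℝ) (hε : 0 < ε)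
    (φnum φden : Fin m → (Fin n → ℂ) → ℂ)
    (hφn : ∀ i, AnalyticOnNhd ℂ (φnum i) (ball (0 : Fin n → ℂ) ε))
    (hφd : ∀ i, AnalyticOnNhd ℂ (φden i) (ball (0 : Fin n → ℂ) ε))
    (hφdz : ∀ i, ∃ z ∈ ball (0 : Fin n → ℂ) ε, φden i z ≠ 0)
    -- `dφ₁, …, dφ_m` are linearly independent over the meromorphic functions on `B_n(ε)`
    (hli : ∀ gnum gden : Fin m → (Fin n → ℂ) → ℂ,
      (∀ i, AnalyticOnNhd ℂ (gnum i) (ball (0 : Fin n → ℂ) ε)) →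
      (∀ i, AnalyticOnNhd ℂ (gden i) (ball (0 : Fin n → ℂ) ε)) →
      (∀ i, ∃ z ∈ ball (0 : Fin n → ℂ) ε, gden i z ≠ 0) →
      (∀ j : Fin n, ∀ z ∈ ball (0 : Fin n → ℂ) ε, (∀ i, gden i z ≠ 0) →
        (∀ i, φden i z ≠ 0) →
        ∑ i : Fin m, (gnum i z / gden i z) * meroPDeriv n (φnum i) (φden i) j z = 0) →
      ∀ i, ∀ z ∈ ball (0 : Fin n → ℂ) ε, gden i z ≠ 0 → gnum i z = 0) :
    -- `φ₁, …, φ_m` are algebraically independent over `ℂ`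
    ∀ Q : MvPolynomial (Fin m) ℂ,
      (∀ z ∈ ball (0 : Fin n → ℂ) ε, (∀ i, φden i z ≠ 0) →
        eval (fun i => φnum i z / φden i z) Q = 0) → Q = 0 := by
  classical
  obtain ⟨zs, hzs, hzsden⟩ := exists_forall_den_ne_zero hε φden hφd hφdz
  have key : ∀ d : ℕ, ∀ Q : MvPolynomial (Fin m) ℂ, Q.totalDegree ≤ d →
      (∀ z ∈ ball (0 : Fin n → ℂ) ε, (∀ i, φden i z ≠ 0) →
        eval (fun i => φnum i z / φden i z) Q = 0) → Q = 0 := by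
    intro d
    induction d with
    | zero =>
      intro Q hdeg hvan
      have hQC : Q = C (coeff 0 Q) := by
        ext c
        by_cases hc : c = 0
        · subst hc; simp
        · rw [coeff_C, if_neg (fun hh => hc hh.symm)]
          by_contra h0
          have hmem : c ∈ Q.support := MvPolynomial.mem_support_iff.mpr h0
          have hall := ((MvPolynomial.totalDegree_eq_zero_iff _ Q).mp (Nat.le_zero.mp hdeg)) c hmem
          exact hc (Finsupp.ext hall)
      have hz0 := hvan zs hzs hzsden
      rw [hQC, eval_C] at hz0
      rw [hQC, hz0, map_zero]
    | succ d ih =>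
      intro Q hdeg hvan
      set P : Fin m → MvPolynomial (Fin m) ℂ := fun i => pderiv i Q with hP
      set N : Fin m → ℕ := fun i => (P i).totalDegree with hN
      set gden : Fin m → (Fin n → ℂ) → ℂ := fun i z => ∏ k, φden k z ^ (N i) with hgden
      set gnum : Fin m → (Fin n → ℂ) → ℂ := fun i z =>
        ∑ c ∈ (P i).support, coeff c (P i) *
          ∏ k, (φnum k z ^ c k * φden k z ^ (N i - c k)) with hgnum
      have hgnum_an : ∀ i, AnalyticOnNhd ℂ (gnum i) (ball (0 : Fin n → ℂ) ε) := by
        intro i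
        apply Finset.analyticOnNhd_fun_sum
        intro c _
        exact analyticOnNhd_const.mul (Finset.analyticOnNhd_fun_prod _ (fun k _ =>
          ((hφn k).pow _).mul ((hφd k).pow _)))
      have hgden_an : ∀ i, AnalyticOnNhd ℂ (gden i) (ball (0 : Fin n → ℂ) ε) := by
        intro i
        exact Finset.analyticOnNhd_fun_prod _ (fun k _ => (hφd k).pow _)
      have hgden_ne : ∀ i, ∃ z ∈ ball (0 : Fin n → ℂ) ε, gden i z ≠ 0 := by
        intro i
        exact ⟨zs, hzs, Finset.prod_ne_zero_iff.mpr fun k _ => pow_ne_zero _ (hzsden k)⟩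
      have hkey : ∀ i, ∀ z ∈ ball (0 : Fin n → ℂ) ε, (∀ k, φden k z ≠ 0) →
          gnum i z = gden i z * eval (fun k => φnum k z / φden k z) (P i) := by
        intro i z hz hdz
        rw [eval_eq', Finset.mul_sum]
        apply Finset.sum_congr rfl
        intro c hc
        have hck : ∀ k, c k ≤ N i := by
          intro k
          have h1 : c k ≤ c.sum fun _ e => e := by
            rcases Nat.eq_zero_or_pos (c k) with h | h
            · omega
            · exact Finset.single_le_sum (fun _ _ => Nat.zero_le _)
                (Finsupp.mem_support_iff.mpr (by omega))
          exact h1.trans (MvPolynomial.le_totalDegree hc)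
        have hprod : (∏ k, φden k z ^ N i) * ∏ k, (φnum k z / φden k z) ^ c k
            = ∏ k, (φnum k z ^ c k * φden k z ^ (N i - c k)) := by
          rw [← Finset.prod_mul_distrib]
          apply Finset.prod_congr rfl
          intro k _
          have h1 : φden k z ^ N i = φden k z ^ c k * φden k z ^ (N i - c k) := by
            rw [← pow_add, Nat.add_sub_cancel' (hck k)]
          rw [div_pow, h1]
          have hb : φden k z ^ c k ≠ 0 := pow_ne_zero _ (hdz k)
          field_simp
        rw [← hprod]
        ring
      have hsum : ∀ j : Fin n, ∀ z ∈ ball (0 : Fin n → ℂ) ε, (∀ i, gden i z ≠ 0) →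
          (∀ i, φden i z ≠ 0) →
          ∑ i : Fin m, (gnum i z / gden i z) * meroPDeriv n (φnum i) (φden i) j z = 0 := by
        intro j z hz hgnz hdnz
        set Φ : (Fin n → ℂ) → Fin m → ℂ := fun w k => φnum k w / φden k w with hΦdef
        set Φ' : Fin m → (Fin n → ℂ) →L[ℂ] ℂ := fun k =>
          ((φden k z) ^ 2)⁻¹ • (φden k z • fderiv ℂ (φnum k) z - φnum k z • fderiv ℂ (φden k) z)
          with hΦ'def
        have hΦ : ∀ k, HasFDerivAt (fun w => Φ w k) (Φ' k) z := fun k =>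
          hasFDerivAt_div' _ _ z ((hφn k z hz).differentiableAt)
            ((hφd k z hz).differentiableAt) (hdnz k)
        have hF := hasFDerivAt_mvpoly_eval Q Φ Φ' z hΦ
        have hF0 : HasFDerivAt (fun w => eval (Φ w) Q) (0 : (Fin n → ℂ) →L[ℂ] ℂ) z := by
          apply (hasFDerivAt_const (0 : ℂ) z).congr_of_eventuallyEq
          have hball : ∀ᶠ w in 𝓝 z, w ∈ ball (0 : Fin n → ℂ) ε :=
            Filter.eventually_of_mem (isOpen_ball.mem_nhds hz) (fun w hw => hw)
          have hdens : ∀ᶠ w in 𝓝 z, ∀ k, φden k w ≠ 0 :=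
            Filter.eventually_all.mpr fun k => ((hφd k z hz).continuousAt).eventually_ne (hdnz k)
          filter_upwards [hball, hdens] with w hwb hwd
          exact hvan w hwb hwd
        have hL : (∑ i : Fin m, eval (Φ z) (pderiv i Q) • Φ' i) = 0 := hF.unique hF0
        have hLv := congrArg (fun L : (Fin n → ℂ) →L[ℂ] ℂ => L (Pi.single j 1)) hL
        simp only [ContinuousLinearMap.sum_apply, ContinuousLinearMap.smul_apply,
          smul_eq_mul, ContinuousLinearMap.zero_apply] at hLv
        have hratio : ∀ i, gnum i z / gden i z = eval (Φ z) (P i) := by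
          intro i
          rw [hkey i z hz hdnz]
          exact mul_div_cancel_left₀ _ (hgnz i)
        have hmero : ∀ i, meroPDeriv n (φnum i) (φden i) j z = Φ' i (Pi.single j 1) := by
          intro i
          simp only [hΦ'def, meroPDeriv, pderivAt, ContinuousLinearMap.smul_apply,
            ContinuousLinearMap.sub_apply, smul_eq_mul]
          rw [div_eq_inv_mul]
        calc ∑ i : Fin m, (gnum i z / gden i z) * meroPDeriv n (φnum i) (φden i) j z
            = ∑ i : Fin m, eval (Φ z) (pderiv i Q) * Φ' i (Pi.single j 1) := by
              apply Finset.sum_congr rfl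
              intro i _
              rw [hratio i, hmero i]
          _ = 0 := hLv
      have hgz := hli gnum gden hgnum_an hgden_an hgden_ne hsum
      have hP0 : ∀ i, P i = 0 := by
        intro i
        apply ih (P i) (totalDegree_pderiv_le' i Q d hdeg)
        intro z hz hdz
        have hgdz : gden i z ≠ 0 := Finset.prod_ne_zero_iff.mpr fun k _ => pow_ne_zero _ (hdz k)
        have h0 := hgz i z hz hgdz
        rw [hkey i z hz hdz] at h0
        exact (mul_eq_zero.mp h0).resolve_left hgdz
      have hQC := eq_C_of_pderiv_eq_zero Q hP0
      have hz0 := hvan zs hzs hzsden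
      rw [hQC, eval_C] at hz0
      rw [hQC, hz0, map_zero]
  intro Q hvan
  exact key Q.totalDegree Q le_rfl hvan
end

section
/- Let Λ₁ ⊆ Λ₂ be lattices of (ℂ,+) with finite index [Λ₂ : Λ₁] = n. Then there exist a₁, …, aₙ ∈ Λ₂ and a constant C ∈ ℂ such that ℘_{Λ₂}(u) = ∑_{i=1}^n ℘_{Λ₁}(u + aᵢ) + C for all u ∈ ℂ \ Λ₂. -/
/-- `Λ` is a lattice of `(ℂ,+)`: an additive subgroup generated by two complex numbers that are
linearly independent over `ℝ`. -/
def IsComplexLattice (Λ : AddSubgroup ℂ) : Prop :=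
  ∃ ω₁ ω₂ : ℂ, LinearIndependent ℝ ![ω₁, ω₂] ∧ Λ = AddSubgroup.closure {ω₁, ω₂}

/-- The Weierstrass function `℘_Λ(u) = 1/u² + ∑_{ω ∈ Λ, ω ≠ 0} (1/(u−ω)² − 1/ω²)`. -/
noncomputable def wp (Λ : AddSubgroup ℂ) (u : ℂ) : ℂ :=
  1 / u ^ 2 + ∑' ω : {w : ℂ // w ∈ Λ ∧ w ≠ 0}, (1 / (u - ω.1) ^ 2 - 1 / ω.1 ^ 2)

namespace Statement14Aux

/-- The summand of the Weierstrass function, over the full lattice. -/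
noncomputable def wpTerm (u w : ℂ) : ℂ := 1 / (u - w) ^ 2 - (if w = 0 then 0 else 1 / w ^ 2)

/-- Structure of a complex lattice: a parametrization by `ℤ²` together with a norm lower bound. -/
lemma lattice_equiv {Λ : AddSubgroup ℂ} (h : IsComplexLattice Λ) :
    ∃ (E : {x : Fin 2 → ℤ // x ≠ 0} ≃ {w : ℂ // w ∈ Λ ∧ w ≠ 0}) (K : ℝ), 0 < K ∧
      ∀ x : {x : Fin 2 → ℤ // x ≠ 0}, ‖x.1‖ ≤ K * ‖(E x).1‖ := by
  obtain ⟨ω₁, ω₂, hli, rfl⟩ := h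
  set T : (Fin 2 → ℝ) →ₗ[ℝ] ℂ :=
    (LinearMap.proj 0 : (Fin 2 → ℝ) →ₗ[ℝ] ℝ).smulRight ω₁ + (LinearMap.proj 1).smulRight ω₂
    with hTdef
  have hTapp : ∀ y : Fin 2 → ℝ, T y = y 0 • ω₁ + y 1 • ω₂ := fun y => rfl
  have hker : LinearMap.ker T = ⊥ := by
    rw [LinearMap.ker_eq_bot']
    intro y hy
    have h2 := (LinearIndependent.pair_iff.mp hli) (y 0) (y 1) (by rw [← hTapp]; exact hy)
    funext i; fin_cases i
    · exact h2.1
    · exact h2.2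
  obtain ⟨K, hK0, hA⟩ := T.exists_antilipschitzWith hker
  have hTinj : Function.Injective T := LinearMap.ker_eq_bot.mp hker
  set L : (Fin 2 → ℤ) → ℂ := fun x => (x 0 : ℂ) * ω₁ + (x 1 : ℂ) * ω₂ with hLdef
  have hLT : ∀ x : Fin 2 → ℤ, L x = T (fun i => (x i : ℝ)) := by
    intro x
    rw [hTapp]
    simp [Complex.real_smul]; rfl
  have hLinj : Function.Injective L := by
    intro x y hxy
    rw [hLT, hLT] at hxy
    have h2 := hTinj hxy
    funext i
    exact_mod_cast congrFun h2 i
  have hcast : ∀ x : Fin 2 → ℤ, ‖(fun i => (x i : ℝ))‖ = ‖x‖ := by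
    intro x; simp only [Pi.norm_def]; congr 1
  have hmem : ∀ w : ℂ, w ∈ AddSubgroup.closure ({ω₁, ω₂} : Set ℂ) ↔ ∃ x : Fin 2 → ℤ, L x = w := by
    intro w
    rw [AddSubgroup.mem_closure_pair]
    constructor
    · rintro ⟨m, n, rfl⟩
      exact ⟨![m, n], by simp [hLdef, zsmul_eq_mul]⟩
    · rintro ⟨x, rfl⟩
      exact ⟨x 0, x 1, by simp [hLdef, zsmul_eq_mul]⟩
  have hL0 : L 0 = 0 := by simp [hLdef]
  have hne : ∀ x : {x : Fin 2 → ℤ // x ≠ 0}, L x.1 ≠ 0 := fun x hx =>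
    x.2 (hLinj (by rw [hx, hL0]))
  set f : {x : Fin 2 → ℤ // x ≠ 0} → {w : ℂ // w ∈ AddSubgroup.closure ({ω₁, ω₂} : Set ℂ) ∧ w ≠ 0} :=
    fun x => ⟨L x.1, (hmem _).mpr ⟨x.1, rfl⟩, hne x⟩ with hfdef
  have hbij : Function.Bijective f := by
    constructor
    · intro x y hxy
      exact Subtype.ext (hLinj (congrArg Subtype.val hxy))
    · rintro ⟨w, hw, hw0⟩
      obtain ⟨x, rfl⟩ := (hmem w).mp hw
      exact ⟨⟨x, fun h0 => hw0 (by rw [h0, hL0])⟩, rfl⟩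
  refine ⟨Equiv.ofBijective f hbij, K, hK0, fun x => ?_⟩
  have h1 := hA.le_mul_dist (fun i => (x.1 i : ℝ)) 0
  simp only [dist_zero_right, map_zero, dist_zero_right] at h1
  have h2 : dist (T fun i => (x.1 i : ℝ)) (T 0) = ‖(Equiv.ofBijective f hbij x).1‖ := by
    rw [map_zero, dist_zero_right]
    exact congrArg norm (hLT x.1).symm
  calc ‖x.1‖ = ‖(fun i => (x.1 i : ℝ))‖ := (hcast x.1).symm
    _ = dist (fun i => (x.1 i : ℝ)) 0 := (dist_zero_right _).symm
    _ ≤ K * dist (T fun i => (x.1 i : ℝ)) (T 0) := hA.le_mul_dist _ _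
    _ = K * ‖(Equiv.ofBijective f hbij x).1‖ := by rw [h2]

lemma summable_rpow {Λ : AddSubgroup ℂ} (h : IsComplexLattice Λ) :
    Summable fun ω : {w : ℂ // w ∈ Λ ∧ w ≠ 0} => ‖ω.1‖ ^ (-(3 : ℝ)) := by
  obtain ⟨E, K, hK, hE⟩ := lattice_equiv h
  rw [← E.summable_iff]
  have base : Summable fun x : {x : Fin 2 → ℤ // x ≠ 0} => K ^ (3 : ℝ) * ‖x.1‖ ^ (-(3 : ℝ)) :=
    ((EisensteinSeries.summable_one_div_norm_rpow (by norm_num)).subtype _).mul_left _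
  refine base.of_nonneg_of_le (fun x => Real.rpow_nonneg (norm_nonneg _) _) (fun x => ?_)
  have hx0 : (0 : ℝ) < ‖x.1‖ := norm_pos_iff.mpr x.2
  have hEx : ‖x.1‖ / K ≤ ‖(E x).1‖ := by
    rw [div_le_iff₀ hK, mul_comm]; exact hE x
  show ‖(E x).1‖ ^ (-(3 : ℝ)) ≤ K ^ (3 : ℝ) * ‖x.1‖ ^ (-(3 : ℝ))
  calc ‖(E x).1‖ ^ (-(3 : ℝ)) ≤ (‖x.1‖ / K) ^ (-(3 : ℝ)) :=
        Real.rpow_le_rpow_of_nonpos (by positivity) hEx (by norm_num)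
    _ = K ^ (3 : ℝ) * ‖x.1‖ ^ (-(3 : ℝ)) := by
        rw [Real.div_rpow (norm_nonneg _) hK.le, div_eq_mul_inv, Real.rpow_neg hK.le, inv_inv,
          mul_comm]

lemma finite_ball {Λ : AddSubgroup ℂ} (h : IsComplexLattice Λ) (R : ℝ) :
    {ω : {w : ℂ // w ∈ Λ ∧ w ≠ 0} | ‖ω.1‖ ≤ R}.Finite := by
  obtain ⟨E, K, hK, hE⟩ := lattice_equiv h
  have hfin : {x : Fin 2 → ℤ | ‖x‖ ≤ K * R}.Finite := by
    have heq : {x : Fin 2 → ℤ | ‖x‖ ≤ K * R} = Metric.closedBall 0 (K * R) := by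
      ext x; simp [dist_zero_right]
    rw [heq]
    exact (isCompact_closedBall 0 _).finite_of_discrete
  have hfin2 : {x : {x : Fin 2 → ℤ // x ≠ 0} | ‖(E x).1‖ ≤ R}.Finite := by
    refine ((hfin.preimage Subtype.val_injective.injOn).subset ?_)
    intro x hx
    exact le_trans (hE x) (mul_le_mul_of_nonneg_left hx hK.le)
  have heq2 : {ω : {w : ℂ // w ∈ Λ ∧ w ≠ 0} | ‖ω.1‖ ≤ R}
      = E '' {x | ‖(E x).1‖ ≤ R} := by
    ext ω
    constructor
    · intro hω
      exact ⟨E.symm ω, by rw [Set.mem_setOf_eq, E.apply_symm_apply]; exact hω,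
        E.apply_symm_apply ω⟩
    · rintro ⟨x, hx, rfl⟩; exact hx
  rw [heq2]; exact hfin2.image _

set_option maxHeartbeats 1000000 in
lemma summable_norm_sub {Λ : AddSubgroup ℂ} (h : IsComplexLattice Λ) (u : ℂ) :
    Summable fun ω : {w : ℂ // w ∈ Λ ∧ w ≠ 0} => ‖1 / (u - ω.1) ^ 2 - 1 / ω.1 ^ 2‖ := by
  set M : ℝ := 10 * ‖u‖ + 1 with hM
  have key : ∀ ω : {w : ℂ // w ∈ Λ ∧ w ≠ 0}, 2 * ‖u‖ + 2 ≤ ‖ω.1‖ →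
      ‖1 / (u - ω.1) ^ 2 - 1 / ω.1 ^ 2‖ ≤ M * ‖ω.1‖ ^ (-(3 : ℝ)) := by
    rintro ⟨w, hmem, hw0⟩ hω
    simp only at hω ⊢
    have hwpos : (0 : ℝ) < ‖w‖ := lt_of_lt_of_le (by positivity) hω
    have huw : u - w ≠ 0 := by
      intro h0
      have h1 : u = w := sub_eq_zero.mp h0
      rw [← h1] at hω
      nlinarith [norm_nonneg u]
    have hid : 1 / (u - w) ^ 2 - 1 / w ^ 2 = u * (2 * w - u) / ((u - w) ^ 2 * w ^ 2) := by
      field_simp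
      ring
    rw [hid]
    have h1 : ‖w‖ / 2 ≤ ‖u - w‖ := by
      have h2 : ‖w‖ - ‖u‖ ≤ ‖w - u‖ := norm_sub_norm_le w u
      rw [norm_sub_rev w u] at h2
      nlinarith
    have h2 : ‖2 * w - u‖ ≤ 5 / 2 * ‖w‖ := by
      calc ‖2 * w - u‖ ≤ ‖2 * w‖ + ‖u‖ := norm_sub_le _ _
        _ = 2 * ‖w‖ + ‖u‖ := by rw [norm_mul]; norm_num
        _ ≤ 5 / 2 * ‖w‖ := by nlinarith
    have hben : ‖w‖ ^ (-(3 : ℝ)) = (‖w‖ ^ (3 : ℕ))⁻¹ := by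
      rw [Real.rpow_neg hwpos.le, ← Real.rpow_natCast ‖w‖ 3]
      norm_num
    rw [norm_div, norm_mul, norm_mul, norm_pow, norm_pow]
    have hwne : ‖w‖ ≠ 0 := hwpos.ne'
    have hden : (‖w‖ / 2) ^ 2 * ‖w‖ ^ 2 ≤ ‖u - w‖ ^ 2 * ‖w‖ ^ 2 :=
      mul_le_mul_of_nonneg_right (pow_le_pow_left₀ (by positivity) h1 2) (by positivity)
    calc ‖u‖ * ‖2 * w - u‖ / (‖u - w‖ ^ 2 * ‖w‖ ^ 2)
        ≤ ‖u‖ * (5 / 2 * ‖w‖) / ((‖w‖ / 2) ^ 2 * ‖w‖ ^ 2) :=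
          div_le_div₀ (by positivity) (mul_le_mul_of_nonneg_left h2 (norm_nonneg u))
            (by positivity) hden
      _ = 10 * ‖u‖ * (‖w‖ ^ (3 : ℕ))⁻¹ := by
          have habs : ‖w‖ ≠ 0 := hwne
          field_simp
          ring
      _ ≤ M * (‖w‖ ^ (3 : ℕ))⁻¹ :=
          mul_le_mul_of_nonneg_right (by rw [hM]; linarith) (by positivity)
      _ = M * ‖w‖ ^ (-(3 : ℝ)) := by rw [hben]
  refine Summable.of_norm_bounded_eventually ((summable_rpow h).mul_left M) ?_
  rw [Filter.eventually_cofinite]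
  apply Set.Finite.subset (finite_ball h (2 * ‖u‖ + 2))
  intro ω hω
  simp only [Set.mem_setOf_eq] at hω ⊢
  by_contra hc
  push_neg at hc
  exact hω (by rw [norm_norm]; exact key ω hc.le)

/-- The equivalence between the nonzero elements and the complement of `0` in the lattice. -/
def complEquiv (Λ : AddSubgroup ℂ) : {w : ℂ // w ∈ Λ ∧ w ≠ 0} ≃
    ↥((↑({⟨0, Λ.zero_mem⟩} : Finset {w : ℂ // w ∈ Λ}) : Set {w : ℂ // w ∈ Λ})ᶜ) where
  toFun s := ⟨⟨s.1, s.2.1⟩, by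
    simp only [Finset.coe_singleton, Set.mem_compl_iff, Set.mem_singleton_iff]
    exact fun hc => s.2.2 (congrArg Subtype.val hc)⟩
  invFun ω := ⟨ω.1.1, ω.1.2, fun hc => by
    have h2 := ω.2
    simp only [Finset.coe_singleton, Set.mem_compl_iff, Set.mem_singleton_iff] at h2
    exact h2 (Subtype.ext hc)⟩
  left_inv s := rfl
  right_inv ω := rfl

lemma summable_extend {Λ : AddSubgroup ℂ} {M : Type*} [AddCommGroup M] [TopologicalSpace M]
    [IsTopologicalAddGroup M] (g : {w : ℂ // w ∈ Λ} → M)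
    (hg : Summable fun s : {w : ℂ // w ∈ Λ ∧ w ≠ 0} => g ⟨s.1, s.2.1⟩) : Summable g := by
  rw [← (Set.Finite.summable_compl_iff
    (s := (↑({⟨0, Λ.zero_mem⟩} : Finset {w : ℂ // w ∈ Λ}) : Set {w : ℂ // w ∈ Λ}))
    (Finset.finite_toSet _))]
  rw [← (complEquiv Λ).summable_iff]
  exact hg

lemma tsum_split {Λ : AddSubgroup ℂ} (g : {w : ℂ // w ∈ Λ} → ℂ) (hg : Summable g) :
    ∑' ω, g ω = g ⟨0, Λ.zero_mem⟩ + ∑' s : {w : ℂ // w ∈ Λ ∧ w ≠ 0}, g ⟨s.1, s.2.1⟩ := by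
  have h1 := Summable.sum_add_tsum_compl (s := ({⟨0, Λ.zero_mem⟩} : Finset {w : ℂ // w ∈ Λ})) hg
  rw [← h1, Finset.sum_singleton]
  congr 1
  rw [← (complEquiv Λ).tsum_eq (fun ω => g ω.1)]
  rfl

lemma summable_wpTerm_norm {Λ : AddSubgroup ℂ} (h : IsComplexLattice Λ) (u : ℂ) :
    Summable fun ω : {w : ℂ // w ∈ Λ} => ‖wpTerm u ω.1‖ := by
  apply summable_extend
  exact (summable_norm_sub h u).congr fun s => by
    simp only [wpTerm, if_neg s.2.2]

lemma summable_wpTerm {Λ : AddSubgroup ℂ} (h : IsComplexLattice Λ) (u : ℂ) :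
    Summable fun ω : {w : ℂ // w ∈ Λ} => wpTerm u ω.1 :=
  (summable_wpTerm_norm h u).of_norm

lemma wp_eq {Λ : AddSubgroup ℂ} (h : IsComplexLattice Λ) (u : ℂ) :
    wp Λ u = ∑' ω : {w : ℂ // w ∈ Λ}, wpTerm u ω.1 := by
  rw [tsum_split _ (summable_wpTerm h u)]
  unfold wp wpTerm
  congr 1
  · simp
  · exact tsum_congr fun s => by rw [if_neg s.2.2]

end Statement14Aux

open Statement14Aux in
set_option maxHeartbeats 2000000 in
/-- Let `Λ₁ ⊆ Λ₂` be lattices of `(ℂ,+)` with finite index `[Λ₂ : Λ₁] = n`.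
Then there are `a₁, …, aₙ ∈ Λ₂` and a constant `C ∈ ℂ` with
`℘_{Λ₂}(u) = ∑ᵢ ℘_{Λ₁}(u + aᵢ) + C` for all `u ∈ ℂ \ Λ₂`. -/
theorem statement14 (Λ₁ Λ₂ : AddSubgroup ℂ)
    (h₁ : IsComplexLattice Λ₁) (h₂ : IsComplexLattice Λ₂) (hle : Λ₁ ≤ Λ₂)
    (n : ℕ) (hn : 0 < n) (hidx : Λ₁.relIndex Λ₂ = n) :
    ∃ a : Fin n → ℂ, (∀ i, a i ∈ Λ₂) ∧ ∃ C : ℂ,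
      ∀ u : ℂ, u ∉ Λ₂ → wp Λ₂ u = (∑ i : Fin n, wp Λ₁ (u + a i)) + C := by
  classical
  set H : AddSubgroup Λ₂ := Λ₁.addSubgroupOf Λ₂ with hH
  have hcard : Nat.card (Λ₂ ⧸ H) = n := by
    rw [← AddSubgroup.index_eq_card, hH, ← AddSubgroup.relIndex]
    exact hidx
  have hQne : Nat.card (Λ₂ ⧸ H) ≠ 0 := by rw [hcard]; exact hn.ne'
  let b : (Λ₂ ⧸ H) ≃ Fin n := (Nat.equivFinOfCardPos hQne).trans (finCongr hcard)
  let π : Λ₂ →+ (Λ₂ ⧸ H) := QuotientAddGroup.mk' H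
  let aelt : Fin n → Λ₂ := fun i => (b.symm i).out
  let a : Fin n → ℂ := fun i => (aelt i : ℂ)
  have hπa : ∀ i, π (aelt i) = b.symm i := fun i => QuotientAddGroup.out_eq' (b.symm i)
  have hzero : ∀ (x : Λ₂), π x = 0 ↔ (x : ℂ) ∈ Λ₁ := by
    intro x
    rw [show π x = (x : Λ₂ ⧸ H) from rfl, QuotientAddGroup.eq_zero_iff,
      AddSubgroup.mem_addSubgroupOf]
  -- the coset decomposition equivalence
  let m : Fin n × {w : ℂ // w ∈ Λ₁} → {w : ℂ // w ∈ Λ₂} :=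
    fun p => ⟨p.2.1 - a p.1, sub_mem (hle p.2.2) (aelt p.1).2⟩
  have hminj : Function.Injective m := by
    rintro ⟨i, ω⟩ ⟨j, ω'⟩ hpq
    have hval : ω.1 - a i = ω'.1 - a j := congrArg Subtype.val hpq
    have hx : (⟨ω.1, hle ω.2⟩ : Λ₂) - aelt i = (⟨ω'.1, hle ω'.2⟩ : Λ₂) - aelt j :=
      Subtype.ext hval
    have h1 := congrArg π hx
    rw [map_sub, map_sub, hπa, hπa,
      (hzero ⟨ω.1, hle ω.2⟩).mpr ω.2, (hzero ⟨ω'.1, hle ω'.2⟩).mpr ω'.2,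
      zero_sub, zero_sub, neg_inj] at h1
    have hij : i = j := b.symm.injective h1
    subst hij
    exact Prod.ext rfl (Subtype.ext (sub_left_inj.mp hval))
  have hmsurj : Function.Surjective m := by
    rintro ⟨v, hv⟩
    set i : Fin n := b (-(π ⟨v, hv⟩)) with hi
    have hbi : π (aelt i) = -(π ⟨v, hv⟩) := by rw [hπa, hi, Equiv.symm_apply_apply]
    have hmem1 : v + a i ∈ Λ₁ := by
      have h0 : π ((⟨v, hv⟩ : Λ₂) + aelt i) = 0 := by
        rw [map_add, hbi, add_neg_cancel]
      exact (hzero _).mp h0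
    exact ⟨(i, ⟨v + a i, hmem1⟩), Subtype.ext (add_sub_cancel_right v (a i))⟩
  let e : (Fin n × {w : ℂ // w ∈ Λ₁}) ≃ {w : ℂ // w ∈ Λ₂} := Equiv.ofBijective m ⟨hminj, hmsurj⟩
  have he : ∀ p, (e p).1 = p.2.1 - a p.1 := fun p => rfl
  -- the constant
  let d : Fin n × {w : ℂ // w ∈ Λ₁} → ℂ := fun p =>
    (if (e p).1 = 0 then 0 else 1 / (e p).1 ^ 2) - (if p.2.1 = 0 then 0 else 1 / p.2.1 ^ 2)
  refine ⟨a, fun i => (aelt i).2, -∑' p, d p, fun u _ => ?_⟩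
  -- summability facts
  have hT1 : ∀ v : ℂ, Summable fun ω : {w : ℂ // w ∈ Λ₁} => ‖wpTerm v ω.1‖ :=
    summable_wpTerm_norm h₁
  have hF : Summable fun p : Fin n × {w : ℂ // w ∈ Λ₁} => wpTerm (u + a p.1) p.2.1 := by
    apply Summable.of_norm
    rw [summable_prod_of_nonneg (fun p => norm_nonneg _)]
    exact ⟨fun i => hT1 (u + a i), Summable.of_finite⟩
  have hge : Summable fun p : Fin n × {w : ℂ // w ∈ Λ₁} => wpTerm u (e p).1 :=
    e.summable_iff.mpr (summable_wpTerm h₂ u)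
  have hkey : ∀ p : Fin n × {w : ℂ // w ∈ Λ₁},
      wpTerm u (e p).1 = wpTerm (u + a p.1) p.2.1 - d p := by
    intro p
    simp only [wpTerm, d, he p]
    have harg : u - (p.2.1 - a p.1) = u + a p.1 - p.2.1 := by ring
    rw [harg]
    ring
  have hd : Summable d := by
    refine (hF.sub hge).congr fun p => ?_
    rw [hkey p]
    ring
  calc wp Λ₂ u = ∑' ω : {w : ℂ // w ∈ Λ₂}, wpTerm u ω.1 := wp_eq h₂ u
    _ = ∑' p : Fin n × {w : ℂ // w ∈ Λ₁}, wpTerm u (e p).1 :=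
        (e.tsum_eq fun ω => wpTerm u ω.1).symm
    _ = ∑' p : Fin n × {w : ℂ // w ∈ Λ₁}, (wpTerm (u + a p.1) p.2.1 - d p) :=
        tsum_congr hkey
    _ = (∑' p : Fin n × {w : ℂ // w ∈ Λ₁}, wpTerm (u + a p.1) p.2.1) - ∑' p, d p :=
        Summable.tsum_sub hF hd
    _ = (∑ i : Fin n, ∑' ω : {w : ℂ // w ∈ Λ₁}, wpTerm (u + a i) ω.1) - ∑' p, d p := by
        rw [Summable.tsum_prod' hF fun i => (hT1 (u + a i)).of_norm, tsum_fintype]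
    _ = (∑ i : Fin n, wp Λ₁ (u + a i)) + -∑' p, d p := by
        rw [sub_eq_add_neg]
        congr 1
        exact Finset.sum_congr rfl fun i _ => (wp_eq h₁ (u + a i)).symm
end
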